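/- arXiv:1307.0184 — 10 statements merged into one kernel-verified Lean document; each statement's English description precedes it below -/
import Mathlib

section
/- Every Polish space that is strongly locally homogeneous is countable dense homogeneous. That is, if X is a separable completely metrizable space and there exists a base B for the topology of X such that for every U ∈ B and all x, y ∈ U there is a homeomorphism h of X with h(x) = y and h equal to the identity on X \ U, then for every pair (A, B) of countable dense subsets of X there exists a homeomorphism h of X such that h[A] = B. -/
open Metric Filter Topology TopologicalSpace Set

namespace CDHProof

set_option linter.unusedSectionVars false

variable {X : Type*} [MetricSpace X] [CompleteSpace X]

lemma supp_lemma {U : Set X} {g : X ≃ₜ X} (hg : ∀ z ∉ U, g z = z) :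
    (∀ z ∉ U, g.symm z = z) ∧ (∀ z ∈ U, g z ∈ U) ∧ (∀ z ∈ U, g.symm z ∈ U) := by
  have h1 : ∀ z ∉ U, g.symm z = z := by
    intro z hz
    conv_lhs => rw [← hg z hz]
    exact g.symm_apply_apply z
  have h2 : ∀ z ∈ U, g z ∈ U := by
    intro z hz
    by_contra hgz
    have h3 := h1 _ hgz
    rw [g.symm_apply_apply] at h3
    rw [← h3] at hgz
    exact hgz hz
  have h4 : ∀ z ∈ U, g.symm z ∈ U := by
    intro z hz
    by_contra hgz
    have h3 := hg _ hgz
    rw [g.apply_symm_apply] at h3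
    rw [← h3] at hgz
    exact hgz hz
  exact ⟨h1, h2, h4⟩

def Good (Aset Bset : Set X) (h : X ≃ₜ X) (P : Set X) : Prop :=
  P.Finite ∧ P ⊆ Bset ∧ ∀ b ∈ P, h.symm b ∈ Aset

lemma core {𝒰 : Set (Set X)} (h𝒰 : IsTopologicalBasis 𝒰)
    (h : X ≃ₜ X) {P : Set X} (hPf : P.Finite) {ε : ℝ} (hε : 0 < ε)
    {c : X} (hc : c ∉ P) :
    ∃ U ∈ 𝒰, c ∈ U ∧ (∀ p ∈ P, p ∉ U) ∧
      (∀ z ∈ U, dist z c < ε / 2) ∧ (∀ z ∈ U, dist (h.symm z) (h.symm c) < ε / 2) := by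
  obtain ⟨δ, hδ, hδ2⟩ := Metric.continuous_iff.1 h.symm.continuous c (ε / 2) (by linarith)
  have hPc : IsClosed P := hPf.isClosed
  have : Pᶜ ∈ 𝓝 c := hPc.isOpen_compl.mem_nhds hc
  obtain ⟨δ', hδ', hδ'2⟩ := Metric.mem_nhds_iff.1 this
  set r := min (min (ε / 2) δ) δ' with hr
  have hrpos : 0 < r := lt_min (lt_min (by linarith) hδ) hδ'
  obtain ⟨U, hU𝒰, hcU, hUr⟩ := h𝒰.exists_subset_of_mem_open (mem_ball_self hrpos)
    Metric.isOpen_ball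
  refine ⟨U, hU𝒰, hcU, ?_, ?_, ?_⟩
  · intro p hp hpU
    have h1 : p ∈ ball c r := hUr hpU
    have h2 : p ∈ Pᶜ := hδ'2 (ball_subset_ball (min_le_right _ _) h1)
    exact h2 hp
  · intro z hz
    have h1 : dist z c < r := hUr hz
    calc dist z c < r := h1
      _ ≤ ε / 2 := le_trans (min_le_left _ _) (min_le_left _ _)
  · intro z hz
    have h1 : dist z c < r := hUr hz
    exact hδ2 z (lt_of_lt_of_le h1 (le_trans (min_le_left _ _) (min_le_right _ _)))

lemma glue (h : X ≃ₜ X) {P : Set X} {U : Set X} {c : X} {ε : ℝ} (hε : 0 ≤ ε)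
    (hPU : ∀ p ∈ P, p ∉ U)
    (hUd : ∀ z ∈ U, dist z c < ε / 2)
    (hUd' : ∀ z ∈ U, dist (h.symm z) (h.symm c) < ε / 2)
    {g : X ≃ₜ X} (hgsupp : ∀ z ∉ U, g z = z) :
    (∀ p ∈ P, (h.trans g).symm p = h.symm p) ∧
      (∀ x, dist ((h.trans g) x) (h x) ≤ ε) ∧
      (∀ y, dist ((h.trans g).symm y) (h.symm y) ≤ ε) := by
  obtain ⟨hg1, hg2, hg3⟩ := supp_lemma hgsupp
  have hsymm : ∀ y, (h.trans g).symm y = h.symm (g.symm y) := fun y => rfl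
  have happ : ∀ x, (h.trans g) x = g (h x) := fun x => rfl
  refine ⟨?_, ?_, ?_⟩
  · intro p hp
    rw [hsymm, hg1 p (hPU p hp)]
  · intro x
    rw [happ]
    by_cases hx : h x ∈ U
    · have h1 := hUd _ (hg2 _ hx)
      have h2 := hUd _ hx
      calc dist (g (h x)) (h x) ≤ dist (g (h x)) c + dist c (h x) := dist_triangle _ _ _
        _ = dist (g (h x)) c + dist (h x) c := by rw [dist_comm c]
        _ ≤ ε := by linarith
    · rw [hgsupp _ hx, dist_self]; exact hε
  · intro y
    rw [hsymm]
    by_cases hy : y ∈ U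
    · have h1 := hUd' _ (hg3 _ hy)
      have h2 := hUd' _ hy
      calc dist (h.symm (g.symm y)) (h.symm y)
          ≤ dist (h.symm (g.symm y)) (h.symm c) + dist (h.symm c) (h.symm y) :=
            dist_triangle _ _ _
        _ = dist (h.symm (g.symm y)) (h.symm c) + dist (h.symm y) (h.symm c) := by
            rw [dist_comm (h.symm c)]
        _ ≤ ε := by linarith
    · rw [hg1 _ hy, dist_self]; exact hε


/-- one step of the back-and-forth -/
lemma key {𝒰 : Set (Set X)} (h𝒰 : IsTopologicalBasis 𝒰)
    (hSLH : ∀ U ∈ 𝒰, ∀ x ∈ U, ∀ y ∈ U, ∃ h : X ≃ₜ X, h x = y ∧ ∀ z ∉ U, h z = z)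
    {Aset Bset : Set X} (hAd : Dense Aset) (hBd : Dense Bset)
    (f e : ℕ → X) (hfA : ∀ k, f k ∈ Aset) (heB : ∀ k, e k ∈ Bset)
    (n : ℕ) (s : (X ≃ₜ X) × Set X) (hG : Good Aset Bset s.1 s.2) :
    ∃ s' : (X ≃ₜ X) × Set X, Good Aset Bset s'.1 s'.2 ∧
      s.2 ⊆ s'.2 ∧ (∀ c ∈ s.2, s'.1.symm c = s.1.symm c) ∧
      (∀ x, dist (s'.1 x) (s.1 x) ≤ (1/2 : ℝ)^n) ∧
      (∀ y, dist (s'.1.symm y) (s.1.symm y) ≤ (1/2 : ℝ)^n) ∧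
      (n % 2 = 0 → s'.1 (f (n/2)) ∈ s'.2) ∧
      (n % 2 = 1 → e (n/2) ∈ s'.2) := by
  obtain ⟨hPf, hPB, hPA⟩ := hG
  set h := s.1
  set P := s.2
  have hεpos : (0:ℝ) < (1/2)^n := by positivity
  rcases Nat.mod_two_eq_zero_or_one n with hpar | hpar
  · -- forward step, a := f (n/2)
    set a := f (n/2) with ha
    set p := h a with hp
    by_cases hpB : p ∈ Bset
    · refine ⟨(h, insert p P), ⟨hPf.insert p, insert_subset hpB hPB, ?_⟩, subset_insert _ _,
        fun c _ => rfl, fun x => by simp [le_of_lt hεpos],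
        fun y => by simp [le_of_lt hεpos], fun _ => mem_insert _ _, fun h1 => by omega⟩
      intro b hb
      rcases mem_insert_iff.1 hb with rfl | hb
      · rw [hp, h.symm_apply_apply]; exact hfA _
      · exact hPA b hb
    · have hpP : p ∉ P := fun hmem => hpB (hPB hmem)
      obtain ⟨U, hU𝒰, hpU, hPU, hUd, hUd'⟩ := core h𝒰 h hPf hεpos hpP
      obtain ⟨b, hbB, hbU⟩ := hBd.exists_mem_open (h𝒰.isOpen hU𝒰) ⟨p, hpU⟩
      obtain ⟨g, hgp, hgsupp⟩ := hSLH U hU𝒰 p hpU b hbU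
      obtain ⟨hstab, hd1, hd2⟩ := glue h (le_of_lt hεpos) hPU hUd hUd' hgsupp
      have hgsymm : g.symm b = p := by rw [← hgp, g.symm_apply_apply]
      refine ⟨(h.trans g, insert b P), ⟨hPf.insert b, insert_subset hbB hPB, ?_⟩,
        subset_insert _ _, hstab, hd1, hd2, ?_, fun h1 => by omega⟩
      · intro c hc
        rcases mem_insert_iff.1 hc with rfl | hc
        · show h.symm (g.symm c) ∈ Aset
          rw [hgsymm, hp, h.symm_apply_apply]
          exact hfA _
        · rw [hstab c hc]; exact hPA c hc
      · intro _
        have : (h.trans g) a = g (h a) := rfl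
        rw [this, ← hp, hgp]
        exact mem_insert _ _
  · -- backward step, b := e (n/2)
    set b := e (n/2) with hb
    by_cases hbP : b ∈ P
    · exact ⟨s, ⟨hPf, hPB, hPA⟩, subset_rfl, fun c _ => rfl,
        fun x => (dist_self _).le.trans hεpos.le, fun y => (dist_self _).le.trans hεpos.le,
        fun h1 => by omega, fun _ => hbP⟩
    · obtain ⟨U, hU𝒰, hbU, hPU, hUd, hUd'⟩ := core h𝒰 h hPf hεpos hbP
      have hopen : IsOpen (h ⁻¹' U) := (h𝒰.isOpen hU𝒰).preimage h.continuous
      have hne : (h ⁻¹' U).Nonempty := ⟨h.symm b, by simp [Set.mem_preimage, hbU]⟩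
      obtain ⟨a', ha'A, ha'U⟩ := hAd.exists_mem_open hopen hne
      obtain ⟨g, hgp, hgsupp⟩ := hSLH U hU𝒰 (h a') ha'U b hbU
      obtain ⟨hstab, hd1, hd2⟩ := glue h (le_of_lt hεpos) hPU hUd hUd' hgsupp
      have hgsymm : g.symm b = h a' := by rw [← hgp, g.symm_apply_apply]
      refine ⟨(h.trans g, insert b P), ⟨hPf.insert b, insert_subset (heB _) hPB, ?_⟩,
        subset_insert _ _, hstab, hd1, hd2, fun h1 => by omega, fun _ => mem_insert _ _⟩
      intro c hc
      rcases mem_insert_iff.1 hc with hceq | hc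
      · show h.symm (g.symm c) ∈ Aset
        rw [hceq, hgsymm, h.symm_apply_apply]
        exact ha'A
      · rw [hstab c hc]; exact hPA c hc


/-- inverse-limit trick -/
lemma inv_lim (v w : ℕ → X → X) (hw : ∀ n, Continuous (w n))
    (hvw : ∀ n x, w n (v n x) = x)
    (F G : X → X) (hFt : ∀ x, Tendsto (fun n => v n x) atTop (𝓝 (F x)))
    (UBw : ∀ n y, dist (w n y) (G y) ≤ 2 * (1/2 : ℝ)^n) :
    ∀ x, G (F x) = x := by
  intro x
  apply eq_of_forall_dist_le
  intro ε hε
  set y := F x with hy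
  -- choose N with 2*(1/2)^N < ε/4
  have htend : Tendsto (fun n : ℕ => 2 * (1/2 : ℝ)^n) atTop (𝓝 0) := by
    have := tendsto_pow_atTop_nhds_zero_of_lt_one (by norm_num : (0:ℝ) ≤ 1/2)
      (by norm_num : (1/2 : ℝ) < 1)
    simpa using this.const_mul 2
  obtain ⟨N, hN⟩ := (Metric.tendsto_atTop.1 htend) (ε/4) (by linarith)
  have hN' : ∀ n ≥ N, 2 * (1/2 : ℝ)^n < ε/4 := by
    intro n hn
    have := hN n hn
    rwa [Real.dist_eq, sub_zero, abs_of_pos (by positivity)] at this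
  -- continuity of w N at y
  obtain ⟨δ, hδpos, hδ⟩ := Metric.continuous_iff.1 (hw N) y (ε/4) (by linarith)
  -- pick k ≥ N with dist (v k x) y < δ
  obtain ⟨N', hN'2⟩ := Metric.tendsto_atTop.1 (hFt x) δ hδpos
  set k := max N N' with hk
  have hkN : N ≤ k := le_max_left _ _
  have hdvk : dist (v k x) y < δ := hN'2 k (le_max_right _ _)
  set z := v k x with hz
  have t1 : dist (G y) (w N y) ≤ 2 * (1/2 : ℝ)^N := by
    rw [dist_comm]; exact UBw N y
  have t2 : dist (w N y) (w N z) < ε/4 := by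
    rw [dist_comm]; exact hδ z hdvk
  have t3 : dist (w N z) x ≤ 2 * (1/2 : ℝ)^N + 2 * (1/2 : ℝ)^k := by
    have hx : w k z = x := hvw k x
    calc dist (w N z) x = dist (w N z) (w k z) := by rw [hx]
      _ ≤ dist (w N z) (G z) + dist (G z) (w k z) := dist_triangle _ _ _
      _ ≤ 2 * (1/2 : ℝ)^N + 2 * (1/2 : ℝ)^k := by
          have := UBw N z
          have h2 := UBw k z
          rw [dist_comm (G z)] at *
          linarith [UBw N z, UBw k z]
  have hNbound := hN' N le_rfl
  have hkbound : 2 * (1/2 : ℝ)^k < ε/4 := hN' k hkN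
  calc dist (G y) x ≤ dist (G y) (w N y) + dist (w N y) x := dist_triangle _ _ _
    _ ≤ dist (G y) (w N y) + (dist (w N y) (w N z) + dist (w N z) x) := by
        linarith [dist_triangle (w N y) (w N z) x]
    _ ≤ ε := by linarith

lemma limit_exists (u : ℕ → X ≃ₜ X)
    (hd : ∀ n x, dist (u (n+1) x) (u n x) ≤ (1/2 : ℝ)^n)
    (hd' : ∀ n y, dist ((u (n+1)).symm y) ((u n).symm y) ≤ (1/2 : ℝ)^n) :
    ∃ H : X ≃ₜ X, (∀ x, Tendsto (fun n => u n x) atTop (𝓝 (H x))) ∧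
      (∀ y, Tendsto (fun n => (u n).symm y) atTop (𝓝 (H.symm y))) := by
  have half_lt : (1/2 : ℝ) < 1 := by norm_num
  have cau : ∀ (v : ℕ → X → X), (∀ n x, dist (v (n+1) x) (v n x) ≤ (1/2 : ℝ)^n) →
      ∀ x, CauchySeq (fun n => v n x) := by
    intro v hv x
    apply cauchySeq_of_le_geometric (1/2 : ℝ) 1 half_lt
    intro n
    rw [dist_comm, one_mul]
    exact hv n x
  have limF : ∀ x, ∃ a, Tendsto (fun n => u n x) atTop (𝓝 a) :=
    fun x => cauchySeq_tendsto_of_complete (cau (fun n x => u n x) (fun n x => hd n x) x)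
  have limG : ∀ y, ∃ a, Tendsto (fun n => (u n).symm y) atTop (𝓝 a) :=
    fun y => cauchySeq_tendsto_of_complete
      (cau (fun n y => (u n).symm y) (fun n y => hd' n y) y)
  choose F hFt using limF
  choose G hGt using limG
  -- uniform bounds
  have UBgen : ∀ (v : ℕ → X → X) (L : X → X),
      (∀ n x, dist (v (n+1) x) (v n x) ≤ (1/2 : ℝ)^n) →
      (∀ x, Tendsto (fun n => v n x) atTop (𝓝 (L x))) →
      ∀ n x, dist (v n x) (L x) ≤ 2 * (1/2 : ℝ)^n := by
    intro v L hv hL n x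
    have := dist_le_of_le_geometric_of_tendsto (1/2 : ℝ) 1 half_lt
      (fun m => by rw [dist_comm, one_mul]; exact hv m x) (hL x) n
    calc dist (v n x) (L x) ≤ 1 * (1/2:ℝ)^n / (1 - 1/2) := this
      _ = 2 * (1/2:ℝ)^n := by ring
  have UBF := UBgen (fun n x => u n x) F (fun n x => hd n x) hFt
  have UBG := UBgen (fun n y => (u n).symm y) G (fun n y => hd' n y) hGt
  -- uniform convergence hence continuity
  have contgen : ∀ (v : ℕ → X → X) (L : X → X), (∀ n, Continuous (v n)) →
      (∀ n x, dist (v n x) (L x) ≤ 2 * (1/2 : ℝ)^n) → Continuous L := by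
    intro v L hvc hub
    have : TendstoUniformly v L atTop := by
      rw [Metric.tendstoUniformly_iff]
      intro ε hε
      have htend : Tendsto (fun n : ℕ => 2 * (1/2 : ℝ)^n) atTop (𝓝 0) := by
        have := tendsto_pow_atTop_nhds_zero_of_lt_one (by norm_num : (0:ℝ) ≤ 1/2) half_lt
        simpa using this.const_mul 2
      obtain ⟨N, hN⟩ := (Metric.tendsto_atTop.1 htend) ε hε
      filter_upwards [eventually_ge_atTop N] with n hn x
      have h1 := hN n hn
      rw [Real.dist_eq, sub_zero, abs_of_pos (by positivity)] at h1
      calc dist (L x) (v n x) = dist (v n x) (L x) := dist_comm _ _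
        _ ≤ 2 * (1/2:ℝ)^n := hub n x
        _ < ε := h1
    exact this.continuous (Eventually.of_forall hvc).frequently
  have contF : Continuous F :=
    contgen _ F (fun n => (u n).continuous) UBF
  have contG : Continuous G :=
    contgen _ G (fun n => (u n).symm.continuous) UBG
  have left : ∀ x, G (F x) = x :=
    inv_lim (fun n x => u n x) (fun n y => (u n).symm y)
      (fun n => (u n).symm.continuous) (fun n x => (u n).symm_apply_apply x) F G hFt UBG
  have right : ∀ y, F (G y) = y :=
    inv_lim (fun n y => (u n).symm y) (fun n x => u n x)
      (fun n => (u n).continuous) (fun n y => (u n).apply_symm_apply y) G F hGt UBF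
  refine ⟨⟨⟨F, G, left, right⟩, contF, contG⟩, hFt, hGt⟩


noncomputable def chain {𝒰 : Set (Set X)} (h𝒰 : IsTopologicalBasis 𝒰)
    (hSLH : ∀ U ∈ 𝒰, ∀ x ∈ U, ∀ y ∈ U, ∃ h : X ≃ₜ X, h x = y ∧ ∀ z ∉ U, h z = z)
    {Aset Bset : Set X} (hAd : Dense Aset) (hBd : Dense Bset)
    (f e : ℕ → X) (hfA : ∀ k, f k ∈ Aset) (heB : ∀ k, e k ∈ Bset) :
    ℕ → {s : (X ≃ₜ X) × Set X // Good Aset Bset s.1 s.2} := fun n =>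
  Nat.rec (motive := fun _ => {s : (X ≃ₜ X) × Set X // Good Aset Bset s.1 s.2})
    ⟨(Homeomorph.refl X, ∅),
      finite_empty, empty_subset _, fun b hb => absurd hb (notMem_empty b)⟩
    (fun m ih =>
      ⟨(key h𝒰 hSLH hAd hBd f e hfA heB m ih.1 ih.2).choose,
       (key h𝒰 hSLH hAd hBd f e hfA heB m ih.1 ih.2).choose_spec.1⟩) n

lemma chain_spec {𝒰 : Set (Set X)} (h𝒰 : IsTopologicalBasis 𝒰)
    (hSLH : ∀ U ∈ 𝒰, ∀ x ∈ U, ∀ y ∈ U, ∃ h : X ≃ₜ X, h x = y ∧ ∀ z ∉ U, h z = z)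
    {Aset Bset : Set X} (hAd : Dense Aset) (hBd : Dense Bset)
    (f e : ℕ → X) (hfA : ∀ k, f k ∈ Aset) (heB : ∀ k, e k ∈ Bset) (n : ℕ) :
    (chain h𝒰 hSLH hAd hBd f e hfA heB n).1.2 ⊆
        (chain h𝒰 hSLH hAd hBd f e hfA heB (n+1)).1.2 ∧
      (∀ c ∈ (chain h𝒰 hSLH hAd hBd f e hfA heB n).1.2,
        (chain h𝒰 hSLH hAd hBd f e hfA heB (n+1)).1.1.symm c =
          (chain h𝒰 hSLH hAd hBd f e hfA heB n).1.1.symm c) ∧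
      (∀ x, dist ((chain h𝒰 hSLH hAd hBd f e hfA heB (n+1)).1.1 x)
        ((chain h𝒰 hSLH hAd hBd f e hfA heB n).1.1 x) ≤ (1/2 : ℝ)^n) ∧
      (∀ y, dist ((chain h𝒰 hSLH hAd hBd f e hfA heB (n+1)).1.1.symm y)
        ((chain h𝒰 hSLH hAd hBd f e hfA heB n).1.1.symm y) ≤ (1/2 : ℝ)^n) ∧
      (n % 2 = 0 → (chain h𝒰 hSLH hAd hBd f e hfA heB (n+1)).1.1
        (f (n/2)) ∈ (chain h𝒰 hSLH hAd hBd f e hfA heB (n+1)).1.2) ∧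
      (n % 2 = 1 → e (n/2) ∈ (chain h𝒰 hSLH hAd hBd f e hfA heB (n+1)).1.2) :=
  (key h𝒰 hSLH hAd hBd f e hfA heB n (chain h𝒰 hSLH hAd hBd f e hfA heB n).1
    (chain h𝒰 hSLH hAd hBd f e hfA heB n).2).choose_spec.2

lemma main {𝒰 : Set (Set X)} (h𝒰 : IsTopologicalBasis 𝒰)
    (hSLH : ∀ U ∈ 𝒰, ∀ x ∈ U, ∀ y ∈ U, ∃ h : X ≃ₜ X, h x = y ∧ ∀ z ∉ U, h z = z)
    {Aset Bset : Set X} (hAc : Aset.Countable) (hAd : Dense Aset)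
    (hBc : Bset.Countable) (hBd : Dense Bset) :
    ∃ H : X ≃ₜ X, H '' Aset = Bset := by
  rcases isEmpty_or_nonempty X with hX | hX
  · refine ⟨Homeomorph.refl X, ?_⟩
    rw [Set.eq_empty_of_isEmpty Aset, Set.eq_empty_of_isEmpty Bset, image_empty]
  · obtain ⟨f, hf⟩ := hAc.exists_eq_range hAd.nonempty
    obtain ⟨e, he⟩ := hBc.exists_eq_range hBd.nonempty
    have hfA : ∀ k, f k ∈ Aset := fun k => hf ▸ mem_range_self k
    have heB : ∀ k, e k ∈ Bset := fun k => he ▸ mem_range_self k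
    set C := chain h𝒰 hSLH hAd hBd f e hfA heB with hC
    set u : ℕ → X ≃ₜ X := fun n => (C n).1.1 with hu
    set P : ℕ → Set X := fun n => (C n).1.2 with hP
    have spec := chain_spec h𝒰 hSLH hAd hBd f e hfA heB
    have good : ∀ n, Good Aset Bset (u n) (P n) := fun n => (C n).2
    obtain ⟨H, hFt, hGt⟩ := limit_exists u (fun n => (spec n).2.2.1) (fun n => (spec n).2.2.2.1)
    -- stability
    have stabGE : ∀ (b : X) (n m : ℕ), n ≤ m → b ∈ P n →
        (u m).symm b = (u n).symm b ∧ b ∈ P m := by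
      intro b n m hnm hb
      induction m, hnm using Nat.le_induction with
      | base => exact ⟨rfl, hb⟩
      | succ m hm ih =>
        obtain ⟨h1, h2⟩ := ih
        exact ⟨by rw [(spec m).2.1 b h2, h1], (spec m).1 h2⟩
    refine ⟨H, subset_antisymm ?_ ?_⟩
    · rintro _ ⟨a, ha, rfl⟩
      rw [hf] at ha
      obtain ⟨k, rfl⟩ := ha
      -- forward placement
      have hprog := (spec (2*k)).2.2.2.2.1 (by omega)
      rw [show (2*k)/2 = k by omega] at hprog
      set b0 := u (2*k+1) (f k) with hb0
      have hsymm0 : (u (2*k+1)).symm b0 = f k := (u (2*k+1)).symm_apply_apply _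
      have hconst : ∀ m, 2*k+1 ≤ m → u m (f k) = b0 := by
        intro m hm
        obtain ⟨h1, _⟩ := stabGE b0 (2*k+1) m hm hprog
        calc u m (f k) = u m ((u m).symm b0) := by rw [h1, hsymm0]
          _ = b0 := (u m).apply_symm_apply _
      have : Tendsto (fun m => u m (f k)) atTop (𝓝 b0) := by
        apply Tendsto.congr' _ (tendsto_const_nhds)
        filter_upwards [eventually_ge_atTop (2*k+1)] with m hm
        exact (hconst m hm).symm
      have hHb : H (f k) = b0 := tendsto_nhds_unique (hFt (f k)) this
      rw [hHb]
      exact (good (2*k+1)).2.1 hprog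
    · intro b hb
      rw [he] at hb
      obtain ⟨k, rfl⟩ := hb
      have hprog := (spec (2*k+1)).2.2.2.2.2 (by omega)
      rw [show (2*k+1)/2 = k by omega] at hprog
      set a0 := (u (2*k+2)).symm (e k) with ha0
      have ha0A : a0 ∈ Aset := (good (2*k+2)).2.2 _ hprog
      have hconst : ∀ m, 2*k+2 ≤ m → (u m).symm (e k) = a0 := by
        intro m hm
        exact (stabGE (e k) (2*k+2) m hm hprog).1
      have : Tendsto (fun m => (u m).symm (e k)) atTop (𝓝 a0) := by
        apply Tendsto.congr' _ (tendsto_const_nhds)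
        filter_upwards [eventually_ge_atTop (2*k+2)] with m hm
        exact (hconst m hm).symm
      have hHs : H.symm (e k) = a0 := tendsto_nhds_unique (hGt (e k)) this
      exact ⟨a0, ha0A, by rw [← hHs, H.apply_symm_apply]⟩


end CDHProof

/-- A space is countable dense homogeneous (CDH) if for every pair of countable
dense subsets there is a homeomorphism mapping one onto the other. -/
def CDH (X : Type*) [TopologicalSpace X] : Prop :=
  ∀ A B : Set X, A.Countable → Dense A → B.Countable → Dense B →
    ∃ h : X ≃ₜ X, h '' A = B

/-- Anderson–Curtis–van Mill: every Polish strongly locally homogeneous space is CDH. -/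
theorem polish_slh_implies_cdh (X : Type*) [TopologicalSpace X] [PolishSpace X]
    (B : Set (Set X)) (hB : TopologicalSpace.IsTopologicalBasis B)
    (hSLH : ∀ U ∈ B, ∀ x ∈ U, ∀ y ∈ U,
      ∃ h : X ≃ₜ X, h x = y ∧ ∀ z ∉ U, h z = z) :
    CDH X := by
  intro A2 B2 hA2c hA2d hB2c hB2d
  letI := upgradeIsCompletelyMetrizable X
  exact CDHProof.main hB hSLH hA2c hA2d hB2c hB2d
end

section
/- (Lavrentiev) Let Z be a Polish space, let S ⊆ Z, and let f : S → S be a homeomorphism of the subspace S onto itself. Then there exist a Gδ subset T of Z with S ⊆ T and a homeomorphism g : T → T of the subspace T onto itself such that g(s) = f(s) for every s ∈ S. -/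
open Set Filter Topology EMetric ENNReal

section Aux

theorem my_isGδ_preimage {W Z : Type*} [TopologicalSpace W] [TopologicalSpace Z]
    {f : W → Z} (hf : Continuous f) {s : Set Z} (hs : IsGδ s) : IsGδ (f ⁻¹' s) := by
  obtain ⟨u, huo, rfl⟩ := hs.eq_iInter_nat
  rw [preimage_iInter]
  exact .iInter_of_isOpen fun n => (huo n).preimage hf

theorem my_isGδ_image_coe {Z : Type*} [TopologicalSpace Z] {Y : Set Z} (hY : IsGδ Y)
    {A : Set Y} (hA : IsGδ A) : IsGδ (((↑) : Y → Z) '' A) := by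
  obtain ⟨g, hgo, rfl⟩ := hA.eq_iInter_nat
  choose u huo hup using fun n => isOpen_induced_iff.1 (hgo n)
  have h1 : (⋂ n, g n) = ((↑) : Y → Z) ⁻¹' (⋂ n, u n) := by
    rw [preimage_iInter]; exact iInter_congr fun n => (hup n).symm
  rw [h1, Subtype.image_preimage_coe]
  exact hY.inter (.iInter_of_isOpen huo)

theorem my_isGδ_inter_preimage {Z : Type*} [TopologicalSpace Z] {Y W : Set Z} (hY : IsGδ Y)
    {F : Z → Z} (hF : ContinuousOn F Y) (hW : IsGδ W) : IsGδ (Y ∩ F ⁻¹' W) := by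
  have h := my_isGδ_image_coe hY (my_isGδ_preimage hF.restrict hW)
  rwa [show (Y.domRestrict F ⁻¹' W) = ((↑) : Y → Z) ⁻¹' (F ⁻¹' W) from rfl,
    Subtype.image_preimage_coe] at h

theorem my_isGδ_inter_eq {Z : Type*} [MetricSpace Z] {B : Set Z} (hB : IsGδ B)
    {φ ψ : Z → Z} (hφ : ContinuousOn φ B) (hψ : ContinuousOn ψ B) :
    IsGδ (B ∩ {x | φ x = ψ x}) := by
  have hc : IsClosed {b : B | φ ↑b = ψ ↑b} := isClosed_eq hφ.restrict hψ.restrict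
  have h := my_isGδ_image_coe hB hc.isGδ
  rwa [show {b : B | φ ↑b = ψ ↑b} = ((↑) : B → Z) ⁻¹' {x | φ x = ψ x} from rfl,
    Subtype.image_preimage_coe] at h

theorem my_isOpen_oscillationWithin_lt {Z Y : Type*} [TopologicalSpace Z] [PseudoEMetricSpace Y]
    (f : Z → Y) (S : Set Z) (ε : ℝ≥0∞) :
    IsOpen {x | oscillationWithin f S x < ε} := by
  refine isOpen_iff_mem_nhds.2 fun x hx => ?_
  rw [mem_setOf_eq, oscillationWithin] at hx
  obtain ⟨t, ht⟩ := iInf_lt_iff.1 hx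
  obtain ⟨htm, htd⟩ := iInf_lt_iff.1 ht
  obtain ⟨U, hUo, hxU, hUS⟩ := mem_nhdsWithin.1 (mem_map.1 htm)
  refine mem_of_superset (hUo.mem_nhds hxU) fun y hy => ?_
  have hmem : t ∈ (𝓝[S] y).map f :=
    mem_map.2 (mem_nhdsWithin.2 ⟨U, hUo, hy, hUS⟩)
  exact lt_of_le_of_lt (biInf_le diam hmem) htd

theorem my_isGδ_oscillationWithin_zero {Z Y : Type*} [TopologicalSpace Z] [PseudoEMetricSpace Y]
    (f : Z → Y) (S : Set Z) : IsGδ {x | oscillationWithin f S x = 0} := by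
  have h : {x | oscillationWithin f S x = 0} =
      ⋂ n : ℕ, {x | oscillationWithin f S x < (((n : ℝ≥0∞)) + 1)⁻¹} := by
    ext x
    simp only [mem_iInter, mem_setOf_eq]
    constructor
    · intro h n
      rw [h]
      exact ENNReal.inv_pos.2 (by exact_mod_cast ENNReal.add_ne_top.2 ⟨ENNReal.natCast_ne_top n, one_ne_top⟩)
    · intro h
      by_contra h0
      obtain ⟨n, hn⟩ := ENNReal.exists_inv_nat_lt h0
      have h1 : ((n : ℝ≥0∞) + 1)⁻¹ ≤ ((n : ℝ≥0∞))⁻¹ :=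
        ENNReal.inv_le_inv.2 (le_add_of_nonneg_right zero_le_one)
      exact absurd (h n) (not_lt.2 (h1.trans hn.le))
  rw [h]
  exact .iInter_of_isOpen fun n => my_isOpen_oscillationWithin_lt f S _

theorem my_exists_tendsto_of_osc {Z Y : Type*} [TopologicalSpace Z] [PseudoEMetricSpace Y]
    [CompleteSpace Y] {f : Z → Y} {S : Set Z} {x : Z} (hx : x ∈ closure S)
    (h : oscillationWithin f S x = 0) : ∃ y, Tendsto f (𝓝[S] x) (𝓝 y) := by
  haveI : (𝓝[S] x).NeBot := mem_closure_iff_nhdsWithin_neBot.1 hx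
  have hc : Cauchy (Filter.map f (𝓝[S] x)) := by
    rw [EMetric.cauchy_iff]
    refine ⟨Filter.map_neBot.ne', fun ε hε => ?_⟩
    have h2 : oscillationWithin f S x < ε := h ▸ hε
    rw [oscillationWithin] at h2
    obtain ⟨t, ht⟩ := iInf_lt_iff.1 h2
    obtain ⟨htm, htd⟩ := iInf_lt_iff.1 ht
    replace ht := htm
    exact ⟨t, htm, fun a ha b hb => lt_of_le_of_lt (edist_le_diam_of_mem ha hb) htd⟩
  obtain ⟨y, hy⟩ := CompleteSpace.complete hc
  exact ⟨y, hy⟩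

/-- Kuratowski-type extension to a Gδ set. -/
theorem my_exists_gdelta_extension {Z : Type*} [MetricSpace Z] [CompleteSpace Z]
    {S : Set Z} {f : Z → Z} (hf : ContinuousOn f S) :
    ∃ G F, IsGδ G ∧ S ⊆ G ∧ ContinuousOn F G ∧ ∀ x ∈ S, F x = f x := by
  set G := closure S ∩ {x | oscillationWithin f S x = 0} with hG
  have hGδ : IsGδ G := isClosed_closure.isGδ.inter (my_isGδ_oscillationWithin_zero f S)
  have hSG : S ⊆ G := fun x hx => ⟨subset_closure hx, (hf x hx).oscillationWithin_eq_zero⟩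
  have hlim : ∀ x ∈ G, ∃ y, Tendsto f (𝓝[S] x) (𝓝 y) := fun x hx =>
    my_exists_tendsto_of_osc hx.1 hx.2
  exact ⟨G, extendFrom S f, hGδ, hSG,
    continuousOn_extendFrom (fun x hx => hx.1) hlim, extendFrom_extends hf⟩

end Aux

/-- Lavrentiev: a homeomorphism of a subset `S` of a Polish space `Z` onto itself
extends to a homeomorphism of a Gδ set `T ⊇ S` onto itself. -/
theorem lavrentiev_extension (Z : Type*) [TopologicalSpace Z] [PolishSpace Z]
    (S : Set Z) (f : ↥S ≃ₜ ↥S) :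
    ∃ (T : Set Z) (hST : S ⊆ T), IsGδ T ∧
      ∃ g : ↥T ≃ₜ ↥T, ∀ s : ↥S, (g ⟨(s : Z), hST s.2⟩ : Z) = ((f s : ↥S) : Z) := by
  classical
  letI := TopologicalSpace.upgradeIsCompletelyMetrizable Z
  set f₀ : Z → Z := fun z => if h : z ∈ S then ((f ⟨z, h⟩ : ↥S) : Z) else z with hf₀
  set f₁ : Z → Z := fun z => if h : z ∈ S then ((f.symm ⟨z, h⟩ : ↥S) : Z) else z with hf₁
  have hf₀S : ∀ x (hx : x ∈ S), f₀ x = ↑(f ⟨x, hx⟩) := fun x hx => by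
    simp only [hf₀]; exact dif_pos hx
  have hf₁S : ∀ x (hx : x ∈ S), f₁ x = ↑(f.symm ⟨x, hx⟩) := fun x hx => by
    simp only [hf₁]; exact dif_pos hx
  have hf₀c : ContinuousOn f₀ S := by
    rw [continuousOn_iff_continuous_restrict]
    have h : S.domRestrict f₀ = fun s => ((f s : ↥S) : Z) := by
      funext s
      simp only [domRestrict, hf₀S _ s.2, Subtype.coe_eta]
    rw [h]
    exact continuous_subtype_val.comp f.continuous
  have hf₁c : ContinuousOn f₁ S := by
    rw [continuousOn_iff_continuous_restrict]
    have h : S.domRestrict f₁ = fun s => ((f.symm s : ↥S) : Z) := by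
      funext s
      simp only [domRestrict, hf₁S _ s.2, Subtype.coe_eta]
    rw [h]
    exact continuous_subtype_val.comp f.symm.continuous
  obtain ⟨G₁, F, hG₁, hSG₁, hFc, hFS⟩ := my_exists_gdelta_extension hf₀c
  obtain ⟨G₂, F', hG₂, hSG₂, hF'c, hF'S⟩ := my_exists_gdelta_extension hf₁c
  have hFval : ∀ x (hx : x ∈ S), F x = ↑(f ⟨x, hx⟩) := fun x hx => by
    rw [hFS x hx, hf₀S x hx]
  have hF'val : ∀ x (hx : x ∈ S), F' x = ↑(f.symm ⟨x, hx⟩) := fun x hx => by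
    rw [hF'S x hx, hf₁S x hx]
  have hFmem : ∀ x ∈ S, F x ∈ S := fun x hx => by rw [hFval x hx]; exact (f ⟨x, hx⟩).2
  have hF'mem : ∀ x ∈ S, F' x ∈ S := fun x hx => by rw [hF'val x hx]; exact (f.symm ⟨x, hx⟩).2
  have hFF' : ∀ x (hx : x ∈ S), F' (F x) = x := fun x hx => by
    rw [hFval x hx, hF'val _ (f ⟨x, hx⟩).2, Subtype.coe_eta, f.symm_apply_apply]
  have hF'F : ∀ x (hx : x ∈ S), F (F' x) = x := fun x hx => by
    rw [hF'val x hx, hFval _ (f.symm ⟨x, hx⟩).2, Subtype.coe_eta, f.apply_symm_apply]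
  set H₁ := (G₁ ∩ F ⁻¹' G₂) ∩ {x | F' (F x) = x} with hH₁def
  set H₂ := (G₂ ∩ F' ⁻¹' G₁) ∩ {x | F (F' x) = x} with hH₂def
  have hB₁ : IsGδ (G₁ ∩ F ⁻¹' G₂) := my_isGδ_inter_preimage hG₁ hFc hG₂
  have hB₂ : IsGδ (G₂ ∩ F' ⁻¹' G₁) := my_isGδ_inter_preimage hG₂ hF'c hG₁
  have hH₁ : IsGδ H₁ := by
    refine my_isGδ_inter_eq hB₁ ?_ continuousOn_id
    exact hF'c.comp (hFc.mono inter_subset_left) (fun x hx => hx.2)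
  have hH₂ : IsGδ H₂ := by
    refine my_isGδ_inter_eq hB₂ ?_ continuousOn_id
    exact hFc.comp (hF'c.mono inter_subset_left) (fun x hx => hx.2)
  have hSH₁ : S ⊆ H₁ := fun x hx =>
    ⟨⟨hSG₁ hx, hSG₂ (hFmem x hx)⟩, hFF' x hx⟩
  have hSH₂ : S ⊆ H₂ := fun x hx =>
    ⟨⟨hSG₂ hx, hSG₁ (hF'mem x hx)⟩, hF'F x hx⟩
  -- membership transfer
  have hH₁toH₂ : ∀ x ∈ H₁, F x ∈ H₂ := by
    rintro x ⟨⟨hx1, hx2⟩, hx3⟩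
    refine ⟨⟨hx2, ?_⟩, ?_⟩
    · show F' (F x) ∈ G₁; rw [hx3]; exact hx1
    · show F (F' (F x)) = F x; rw [hx3]
  have hH₂toH₁ : ∀ x ∈ H₂, F' x ∈ H₁ := by
    rintro x ⟨⟨hx1, hx2⟩, hx3⟩
    refine ⟨⟨hx2, ?_⟩, ?_⟩
    · show F (F' x) ∈ G₂; rw [hx3]; exact hx1
    · show F' (F (F' x)) = F' x; rw [hx3]
  -- iterated sets
  set A : ℕ → Set Z := fun n =>
    Nat.rec (H₁ ∩ H₂) (fun _ An => (An ∩ F ⁻¹' An) ∩ (An ∩ F' ⁻¹' An)) n with hA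
  have hA0 : A 0 = H₁ ∩ H₂ := rfl
  have hAsucc : ∀ n, A (n + 1) = (A n ∩ F ⁻¹' A n) ∩ (A n ∩ F' ⁻¹' A n) := fun n => rfl
  have hAmono : ∀ n, A (n + 1) ⊆ A n := fun n => by
    rw [hAsucc]; exact fun x hx => hx.1.1
  have hA0' : ∀ n, A n ⊆ A 0 := by
    intro n
    induction n with
    | zero => exact subset_rfl
    | succ n ih => exact (hAmono n).trans ih
  have hAG₁ : ∀ n, A n ⊆ G₁ := fun n =>
    (hA0' n).trans (hA0 ▸ fun x hx => hx.1.1.1)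
  have hAG₂ : ∀ n, A n ⊆ G₂ := fun n =>
    (hA0' n).trans (hA0 ▸ fun x hx => hx.2.1.1)
  have hAGδ : ∀ n, IsGδ (A n) := by
    intro n
    induction n with
    | zero => exact hH₁.inter hH₂
    | succ n ih =>
      rw [hAsucc]
      exact (my_isGδ_inter_preimage ih (hFc.mono (hAG₁ n)) ih).inter
        (my_isGδ_inter_preimage ih (hF'c.mono (hAG₂ n)) ih)
  have hSA : ∀ n, S ⊆ A n := by
    intro n
    induction n with
    | zero => exact fun x hx => ⟨hSH₁ hx, hSH₂ hx⟩
    | succ n ih =>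
      rw [hAsucc]
      exact fun x hx => ⟨⟨ih hx, ih (hFmem x hx)⟩, ⟨ih hx, ih (hF'mem x hx)⟩⟩
  set T := ⋂ n, A n with hTdef
  have hST : S ⊆ T := fun x hx => mem_iInter.2 fun n => hSA n hx
  have hTA : ∀ n, T ⊆ A n := fun n => iInter_subset A n
  have hTH₁ : T ⊆ H₁ := (hTA 0).trans (hA0 ▸ fun x hx => hx.1)
  have hTH₂ : T ⊆ H₂ := (hTA 0).trans (hA0 ▸ fun x hx => hx.2)
  have hTG₁ : T ⊆ G₁ := (hTA 0).trans (hAG₁ 0)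
  have hTG₂ : T ⊆ G₂ := (hTA 0).trans (hAG₂ 0)
  have hFT : ∀ x ∈ T, F x ∈ T := by
    intro x hx
    refine mem_iInter.2 fun n => ?_
    have := hTA (n + 1) hx
    rw [hAsucc] at this
    exact this.1.2
  have hF'T : ∀ x ∈ T, F' x ∈ T := by
    intro x hx
    refine mem_iInter.2 fun n => ?_
    have := hTA (n + 1) hx
    rw [hAsucc] at this
    exact this.2.2
  have hinv1 : ∀ x ∈ T, F' (F x) = x := fun x hx => (hTH₁ hx).2
  have hinv2 : ∀ x ∈ T, F (F' x) = x := fun x hx => (hTH₂ hx).2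
  refine ⟨T, hST, .iInter hAGδ, ?_⟩
  refine ⟨{ toFun := fun x => ⟨F x, hFT x x.2⟩
            invFun := fun x => ⟨F' x, hF'T x x.2⟩
            left_inv := fun x => Subtype.ext (hinv1 x x.2)
            right_inv := fun x => Subtype.ext (hinv2 x x.2)
            continuous_toFun := ((hFc.mono hTG₁).restrict).subtype_mk _
            continuous_invFun := ((hF'c.mono hTG₂).restrict).subtype_mk _ }, ?_⟩
  intro s
  show F ↑s = ↑(f s)
  rw [hFval _ s.2, Subtype.coe_eta]
end

section
/- The product space 2^ω × S¹ of the Cantor space with the circle is not countable dense homogeneous: there exist countable dense subsets A and B of 2^ω × S¹ such that no homeomorphism h of 2^ω × S¹ satisfies h[A] = B. -/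
private lemma circle_univ_preconnected : IsPreconnected (Set.univ : Set Circle) := by
  have hsurj : Function.Surjective Circle.exp := fun z => ⟨Complex.arg z, Circle.exp_arg z⟩
  have : (Set.univ : Set Circle) = Circle.exp '' Set.univ := by
    rw [Set.image_univ, eq_comm, Set.range_eq_univ]; exact hsurj
  rw [this]
  exact isPreconnected_univ.image _ Circle.exp.continuous.continuousOn

private lemma cantor_uncountable : ¬ (Set.univ : Set (ℕ → Bool)).Countable := by
  intro h
  have : Countable (ℕ → Bool) := Set.countable_univ_iff.mp h
  have : Countable (Set ℕ) :=
    Countable.of_equiv (ℕ → Bool) (Equiv.arrowCongr (Equiv.refl ℕ) Equiv.propEquivBool).symm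
  obtain ⟨f, hf⟩ := exists_injective_nat (Set ℕ)
  exact Function.cantor_injective f hf

private lemma circle_nontrivial : Nontrivial Circle := by
  refine ⟨1, Circle.exp Real.pi, ?_⟩
  intro h
  have := congrArg Subtype.val h
  simp [Circle.coe_exp, Complex.exp_pi_mul_I] at this
  norm_num at this

/-- The product of the Cantor set with the circle is not CDH: there are countable
dense subsets `A`, `B` with no homeomorphism mapping `A` onto `B`. -/
theorem cantor_times_circle_not_cdh :
    ∃ A B : Set ((ℕ → Bool) × Circle),
      A.Countable ∧ Dense A ∧ B.Countable ∧ Dense B ∧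
      ∀ h : ((ℕ → Bool) × Circle) ≃ₜ ((ℕ → Bool) × Circle), h '' A ≠ B := by
  -- countable dense sets in each factor
  obtain ⟨D, hDc, hDd⟩ := TopologicalSpace.exists_countable_dense (ℕ → Bool)
  obtain ⟨E, hEc, hEd⟩ := TopologicalSpace.exists_countable_dense Circle
  -- a point of the Cantor space outside `D`
  obtain ⟨x₀, -, hx₀⟩ : ∃ x₀ ∈ Set.univ, x₀ ∉ D := by
    by_contra hcon
    push_neg at hcon
    exact cantor_uncountable (hDc.mono (fun x _ => hcon x trivial))
  -- two distinct points of `E`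
  have : Nontrivial Circle := circle_nontrivial
  obtain ⟨c₁, c₂, hc⟩ := exists_pair_ne Circle
  obtain ⟨U, V, hU, hV, hc₁U, hc₂V, hUV⟩ := t2_separation hc
  obtain ⟨e₁, he₁E, he₁U⟩ := hEd.exists_mem_open hU ⟨c₁, hc₁U⟩
  obtain ⟨e₂, he₂E, he₂V⟩ := hEd.exists_mem_open hV ⟨c₂, hc₂V⟩
  have he12 : e₁ ≠ e₂ := by
    intro hEq
    subst hEq
    exact Set.disjoint_left.mp hUV he₁U he₂V
  refine ⟨D ×ˢ E, (D ×ˢ E) ∪ {(x₀, 1)}, hDc.prod hEc, hDd.prod hEd,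
    (hDc.prod hEc).union (Set.countable_singleton _),
    (hDd.prod hEd).mono Set.subset_union_left, ?_⟩
  intro h hAB
  -- the special point is in the image of `A`
  have hmem : ((x₀, 1) : (ℕ → Bool) × Circle) ∈ h '' (D ×ˢ E) := by
    rw [hAB]; exact Or.inr rfl
  obtain ⟨a, haA, ha⟩ := hmem
  obtain ⟨x, e⟩ := a
  obtain ⟨hxD, heE⟩ := haA
  -- the fiber {x} × Circle is preconnected and its image has subsingleton projection
  have hfib : IsPreconnected (({x} : Set (ℕ → Bool)) ×ˢ (Set.univ : Set Circle)) :=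
    isPreconnected_singleton.prod circle_univ_preconnected
  have himg : IsPreconnected (Prod.fst '' (h '' (({x} : Set (ℕ → Bool)) ×ˢ Set.univ))) :=
    (hfib.image _ h.continuous.continuousOn).image _ continuous_fst.continuousOn
  have hsub : (Prod.fst '' (h '' (({x} : Set (ℕ → Bool)) ×ˢ Set.univ))).Subsingleton :=
    isTotallyDisconnected_of_totallyDisconnectedSpace _ _ (Set.subset_univ _) himg
  -- every point of the fiber maps to first coordinate x₀
  have hx0mem : x₀ ∈ Prod.fst '' (h '' (({x} : Set (ℕ → Bool)) ×ˢ Set.univ)) :=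
    ⟨(x₀, 1), ⟨(x, e), ⟨rfl, trivial⟩, ha⟩, rfl⟩
  have key : ∀ z : Circle, (h (x, z)).1 = x₀ := by
    intro z
    exact hsub ⟨h (x, z), ⟨(x, z), ⟨rfl, trivial⟩, rfl⟩, rfl⟩ hx0mem
  -- both h(x,e₁) and h(x,e₂) are in B with first coordinate x₀
  have hfst : ∀ z ∈ E, h (x, z) = (x₀, 1) := by
    intro z hz
    have hmem : h (x, z) ∈ (D ×ˢ E) ∪ {((x₀, 1) : (ℕ → Bool) × Circle)} := by
      rw [← hAB]; exact ⟨(x, z), ⟨hxD, hz⟩, rfl⟩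
    rcases hmem with hmem | hmem
    · exact absurd (key z ▸ hmem.1) hx₀
    · exact hmem
  have : ((x, e₁) : (ℕ → Bool) × Circle) = (x, e₂) :=
    h.injective ((hfst e₁ he₁E).trans (hfst e₂ he₂E).symm)
  exact he12 (congrArg Prod.snd this)
end

section
/- Every Bernstein set is completely Baire: if X ⊆ 2^ω satisfies X ∩ K ≠ ∅ and (2^ω \ X) ∩ K ≠ ∅ for every perfect subset K of 2^ω, then every closed subspace of X (with the subspace topology) is a Baire space. -/
open Set PiNat

namespace BernsteinCB

variable {α : Type*}

/-- Recursive construction of a binary tree of objects. -/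
lemma exists_tree (Inv : ℕ → α → Prop) (Q R : α → α → Prop) (root : α)
    (h0 : Inv 0 root)
    (step : ∀ n p, Inv n p → ∃ c : Bool → α,
      (∀ b, Inv (n + 1) (c b)) ∧ (∀ b, Q (c b) p) ∧ R (c false) (c true)) :
    ∃ F : List Bool → α, F [] = root ∧ (∀ s : List Bool, Inv s.length (F s)) ∧
      (∀ (b : Bool) (s : List Bool), Q (F (b :: s)) (F s)) ∧
      (∀ s : List Bool, R (F (false :: s)) (F (true :: s))) := by
  choose c hc1 hc2 hc3 using step
  let G : (s : List Bool) → {a : α // Inv s.length a} :=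
    fun s => List.rec (motive := fun s => {a : α // Inv s.length a})
      ⟨root, h0⟩ (fun b s ih => ⟨c s.length ih.1 ih.2 b, hc1 _ _ _ b⟩) s
  exact ⟨fun s => (G s).1, rfl, fun s => (G s).2,
    fun b s => hc2 s.length (G s).1 (G s).2 b,
    fun s => hc3 s.length (G s).1 (G s).2⟩

/-- The reversed list of the first `n` values of `x`. -/
def br (x : ℕ → Bool) : ℕ → List Bool
  | 0 => []
  | n + 1 => x n :: br x n

lemma br_length (x : ℕ → Bool) (n : ℕ) : (br x n).length = n := by
  induction n with
  | zero => rfl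
  | succ n ih => simp [br, ih]

lemma br_eq_of_agree {x y : ℕ → Bool} {n : ℕ} (h : ∀ j < n, x j = y j) :
    br x n = br y n := by
  induction n with
  | zero => rfl
  | succ n ih =>
    simp only [br]
    exact congrArg₂ _ (h n (Nat.lt_succ_self n)) (ih fun j hj => h j (hj.trans (Nat.lt_succ_self n)))

end BernsteinCB

open BernsteinCB

/-- Every Bernstein set in the Cantor space is completely Baire: every closed
subspace of it is a Baire space. -/
theorem bernstein_set_completely_baire (X : Set (ℕ → Bool))
    (hBernstein : ∀ K : Set (ℕ → Bool), Perfect K → K.Nonempty →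
      (X ∩ K).Nonempty ∧ (Xᶜ ∩ K).Nonempty) :
    ∀ C : Set ↥X, IsClosed C → BaireSpace ↥C := by
  intro C hC
  refine ⟨fun f hfo hfd => ?_⟩
  by_contra hnd
  -- the inclusion of the subspace into Cantor space
  let ι : ↥C → (ℕ → Bool) := fun c => ((c : ↥X) : ℕ → Bool)
  have hι_cont : Continuous ι := continuous_subtype_val.comp continuous_subtype_val
  have hι_ind : Topology.IsInducing ι :=
    Topology.IsInducing.subtypeVal.comp Topology.IsInducing.subtypeVal
  set D : Set (ℕ → Bool) := Set.range ι with hD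
  -- basic facts about cylinders
  have hbasis : ∀ (O : Set (ℕ → Bool)), IsOpen O → ∀ a ∈ O, ∃ m, cylinder a m ⊆ O := by
    intro O hO a ha
    obtain ⟨t, ⟨w, m, rfl⟩, hat, htO⟩ :=
      (isTopologicalBasis_cylinders (fun _ : ℕ => Bool)).exists_subset_of_mem_open ha hO
    exact ⟨m, by rw [mem_cylinder_iff_eq.mp hat]; exact htO⟩
  -- pull back the open dense sets
  have hGex : ∀ n, ∃ G : Set (ℕ → Bool), IsOpen G ∧ ι ⁻¹' G = f n := by
    intro n
    exact hι_ind.isOpen_iff.mp (hfo n)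
  choose G hGo hGf using hGex
  -- density in usable form
  have hdense : ∀ (n : ℕ) (a : ℕ → Bool), a ∈ D → ∀ m : ℕ,
      ∃ b, b ∈ D ∧ b ∈ cylinder a m ∧ b ∈ G n := by
    intro n a ha m
    obtain ⟨c, rfl⟩ := ha
    have hne : (ι ⁻¹' (cylinder (ι c) m)).Nonempty := ⟨c, self_mem_cylinder _ _⟩
    obtain ⟨c', hc'1, hc'2⟩ := (hfd n).inter_open_nonempty _
      ((isOpen_cylinder (fun _ : ℕ => Bool) (ι c) m).preimage hι_cont) hne
    rw [← hGf n] at hc'2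
    exact ⟨ι c', ⟨c', rfl⟩, hc'1, hc'2⟩
  -- non-density gives a point and open set
  have hndW : ∃ z W, z ∈ D ∧ IsOpen W ∧ z ∈ W ∧ ∀ a ∈ D, a ∈ W → ∃ n, a ∉ G n := by
    rw [dense_iff_inter_open] at hnd
    push_neg at hnd
    obtain ⟨O, hOo, hOne, hOempty⟩ := hnd
    obtain ⟨W, hWo, hWO⟩ := hι_ind.isOpen_iff.mp hOo
    obtain ⟨c₀, hc₀⟩ := hOne
    refine ⟨ι c₀, W, ⟨c₀, rfl⟩, hWo, by rw [← hWO] at hc₀; exact hc₀, ?_⟩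
    rintro _ ⟨c, rfl⟩ hcW
    by_contra hcon
    push_neg at hcon
    have hcmem : c ∈ O ∩ ⋂ n, f n :=
      ⟨by rw [← hWO]; exact hcW, by rw [mem_iInter]; intro n; rw [← hGf n]; exact hcon n⟩
    rw [hOempty] at hcmem
    exact hcmem
  obtain ⟨z, W, hzD, hWo, hzW, hdisj⟩ := hndW
  -- no relatively isolated points inside W
  have hpt : ∀ a, a ∈ D → ∀ m, cylinder a m ⊆ W → ∃ b, b ∈ D ∧ b ∈ cylinder a m ∧ b ≠ a := by
    intro a ha m hmW
    by_contra hcon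
    push_neg at hcon
    have haG : ∀ n, a ∈ G n := by
      intro n
      obtain ⟨b, hbD, hbc, hbG⟩ := hdense n a ha m
      rwa [← hcon b hbD hbc]
    obtain ⟨n, hn⟩ := hdisj a ha (hmW (self_mem_cylinder a m))
    exact hn (haG n)
  -- the invariant for the tree construction
  set Inv : ℕ → (ℕ → Bool) × ℕ → Prop := fun n p =>
    p.1 ∈ D ∧ cylinder p.1 p.2 ⊆ W ∧ (∀ k < n, cylinder p.1 p.2 ⊆ G k) ∧ n ≤ p.2 with hInvdef
  obtain ⟨m₀, hm₀⟩ := hbasis W hWo z hzW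
  have hroot : Inv 0 (z, m₀) := ⟨hzD, hm₀, fun k hk => absurd hk (Nat.not_lt_zero k), Nat.zero_le _⟩
  -- the splitting step
  have hstep : ∀ n p, Inv n p → ∃ c : Bool → (ℕ → Bool) × ℕ,
      (∀ b, Inv (n + 1) (c b)) ∧
      (∀ b, cylinder (c b).1 (c b).2 ⊆ cylinder p.1 p.2) ∧
      (cylinder (c false).1 (c false).2 ∩ cylinder (c true).1 (c true).2 = ∅) := by
    intro n ⟨a, m⟩ ⟨haD, haW, haG, ham⟩
    obtain ⟨b, hbD, hbc, hba⟩ := hpt a haD m haW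
    set j := firstDiff b a with hj
    set q := max m (max (j + 1) (n + 1)) with hq
    have hmq : m ≤ q := le_max_left _ _
    have hjq : j < q := lt_of_lt_of_le (Nat.lt_succ_self j) ((le_max_left _ _).trans (le_max_right _ _))
    have hnq : n + 1 ≤ q := (le_max_right _ _).trans (le_max_right _ _)
    -- refine a point into G n
    have refine_step : ∀ u, u ∈ D → ∃ v r, v ∈ D ∧ cylinder v r ⊆ cylinder u q ∧
        cylinder v r ⊆ G n ∧ q ≤ r := by
      intro u huD
      obtain ⟨v, hvD, hvc, hvG⟩ := hdense n u huD q
      obtain ⟨r₀, hr₀⟩ := hbasis (G n) (hGo n) v hvG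
      refine ⟨v, max q r₀, hvD, ?_, ?_, le_max_left _ _⟩
      · calc cylinder v (max q r₀) ⊆ cylinder v q := cylinder_anti v (le_max_left _ _)
          _ = cylinder u q := mem_cylinder_iff_eq.mp hvc
      · exact (cylinder_anti v (le_max_right _ _)).trans hr₀
    obtain ⟨v₀, r₀, hv₀D, hv₀c, hv₀G, hqr₀⟩ := refine_step a haD
    obtain ⟨v₁, r₁, hv₁D, hv₁c, hv₁G, hqr₁⟩ := refine_step b hbD
    have hsubb : cylinder b q ⊆ cylinder a m := by
      calc cylinder b q ⊆ cylinder b m := cylinder_anti b hmq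
        _ = cylinder a m := mem_cylinder_iff_eq.mp hbc
    have hsuba : cylinder a q ⊆ cylinder a m := cylinder_anti a hmq
    have hdisjc : cylinder v₀ r₀ ∩ cylinder v₁ r₁ = ∅ := by
      rw [eq_empty_iff_forall_notMem]
      rintro y ⟨hy0, hy1⟩
      have h0 : y ∈ cylinder a q := hv₀c hy0
      have h1 : y ∈ cylinder b q := hv₁c hy1
      have e0 : y j = a j := h0 j hjq
      have e1 : y j = b j := h1 j hjq
      exact apply_firstDiff_ne hba (by rw [← hj, ← e1, e0])
    refine ⟨fun bit => if bit then (v₁, r₁) else (v₀, r₀), ?_, ?_, ?_⟩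
    · intro bit
      have key : ∀ (v : ℕ → Bool) (r : ℕ), v ∈ D → cylinder v r ⊆ cylinder a m → cylinder v r ⊆ G n →
          q ≤ r → Inv (n + 1) (v, r) := by
        intro v r hvD hsub hsubG hqr
        refine ⟨hvD, hsub.trans haW, ?_, le_trans hnq hqr⟩
        intro k hk
        rcases Nat.lt_succ_iff_lt_or_eq.mp hk with hk' | rfl
        · exact hsub.trans (haG k hk')
        · exact hsubG
      cases bit
      · exact key v₀ r₀ hv₀D (hv₀c.trans hsuba) hv₀G hqr₀
      · exact key v₁ r₁ hv₁D (hv₁c.trans hsubb) hv₁G hqr₁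
    · intro bit
      cases bit
      · exact hv₀c.trans hsuba
      · exact hv₁c.trans hsubb
    · simpa using hdisjc
  obtain ⟨F, hF0, hFInv, hFQ, hFR⟩ := exists_tree Inv
    (fun p p' => cylinder p.1 p.2 ⊆ cylinder p'.1 p'.2)
    (fun p p' => cylinder p.1 p.2 ∩ cylinder p'.1 p'.2 = ∅) (z, m₀) hroot hstep
  -- the chain of cylinders along a branch
  have hlen : ∀ s : List Bool, s.length ≤ (F s).2 := fun s => (hFInv s).2.2.2
  have hchain : ∀ (x : ℕ → Bool) {m n : ℕ}, m ≤ n →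
      cylinder (F (br x n)).1 (F (br x n)).2 ⊆ cylinder (F (br x m)).1 (F (br x m)).2 := by
    intro x m n hmn
    induction n, hmn using Nat.le_induction with
    | base => exact fun y => id
    | succ n hmn ih => exact (hFQ (x n) (br x n)).trans ih
  -- the limit map
  set g : (ℕ → Bool) → (ℕ → Bool) := fun x i => (F (br x (i + 1))).1 i with hg
  have hmemg : ∀ (x : ℕ → Bool) (n : ℕ), g x ∈ cylinder (F (br x n)).1 (F (br x n)).2 := by
    intro x n
    intro i hi
    rcases le_or_gt (i + 1) n with h | h
    · -- g x i is defined from level i+1, center of level n lies in cylinder of level i+1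
      have hself : (F (br x n)).1 ∈ cylinder (F (br x (i + 1))).1 (F (br x (i + 1))).2 :=
        hchain x h (self_mem_cylinder (F (br x n)).1 (F (br x n)).2)
      have hile : i < (F (br x (i + 1))).2 := lt_of_lt_of_le (Nat.lt_succ_self i)
        (by simpa [br_length] using hlen (br x (i + 1)))
      exact (hself i hile).symm
    · -- level n is below level i+1
      have hself : (F (br x (i + 1))).1 ∈ cylinder (F (br x n)).1 (F (br x n)).2 :=
        hchain x h.le (self_mem_cylinder (F (br x (i + 1))).1 (F (br x (i + 1))).2)
      exact hself i hi
  have hagree : ∀ (x y : ℕ → Bool) (n : ℕ), (∀ j, j < n → x j = y j) →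
      ∀ i < n, g x i = g y i := by
    intro x y n h i hi
    have : br x (i + 1) = br y (i + 1) :=
      br_eq_of_agree fun j hj => h j (lt_of_lt_of_le hj hi)
    simp only [hg, this]
  have hinj : Function.Injective g := by
    intro x y hxy
    by_contra hne
    set j := firstDiff x y with hj
    have hsj : br x j = br y j := br_eq_of_agree fun k hk => apply_eq_of_lt_firstDiff hk
    have hxj : x j ≠ y j := apply_firstDiff_ne hne
    have hdisjj : cylinder (F (x j :: br x j)).1 (F (x j :: br x j)).2 ∩
        cylinder (F (y j :: br x j)).1 (F (y j :: br x j)).2 = ∅ := by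
      cases hx : x j <;> cases hy : y j
      · exact absurd (hx.trans hy.symm) hxj
      · exact hFR (br x j)
      · rw [inter_comm]; exact hFR (br x j)
      · exact absurd (hx.trans hy.symm) hxj
    have h1 : g x ∈ cylinder (F (x j :: br x j)).1 (F (x j :: br x j)).2 := by
      have := hmemg x (j + 1); simpa [br] using this
    have h2 : g y ∈ cylinder (F (y j :: br x j)).1 (F (y j :: br x j)).2 := by
      have := hmemg y (j + 1); rw [hxy] at *; simpa [br, hsj] using this
    rw [eq_empty_iff_forall_notMem] at hdisjj
    exact hdisjj (g x) ⟨h1, by rw [hxy]; exact h2⟩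
  have hcont : Continuous g := by
    apply continuous_pi
    intro i
    have hfac : (fun x => g x i) =
        (fun v : Fin (i + 1) → Bool =>
          (F (br (fun j => if h : j < i + 1 then v ⟨j, h⟩ else false) (i + 1))).1 i) ∘
        (fun (x : ℕ → Bool) (j : Fin (i + 1)) => x j) := by
      funext x
      simp only [Function.comp]
      have : br (fun j => if h : j < i + 1 then x j else false) (i + 1) = br x (i + 1) :=
        br_eq_of_agree fun j hj => by simp [hj]
      rw [this]
    rw [hfac]
    exact (continuous_of_discreteTopology).comp (continuous_pi fun j => continuous_apply (j : ℕ))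
  -- K is a nonempty perfect set
  set K : Set (ℕ → Bool) := Set.range g with hK
  have hKne : K.Nonempty := ⟨g (fun _ => false), mem_range_self _⟩
  have hKclosed : IsClosed K := (isCompact_range hcont).isClosed
  have hKperf : Perfect K := by
    refine ⟨hKclosed, ?_⟩
    rintro a ⟨x, rfl⟩
    rw [accPt_iff_nhds]
    intro U hU
    obtain ⟨t, ⟨w, m, rfl⟩, hat, htU⟩ :=
      (isTopologicalBasis_cylinders (fun _ : ℕ => Bool)).mem_nhds_iff.mp hU
    set x' : ℕ → Bool := Function.update x m (!(x m)) with hx'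
    have hxx' : x' ≠ x := by
      intro h
      have := congrFun h m
      simp [hx'] at this
    refine ⟨g x', ⟨?_, ⟨x', rfl⟩⟩, fun h => hxx' (hinj h)⟩
    apply htU
    rw [← mem_cylinder_iff_eq.mp hat]
    intro i hi
    exact hagree x' x m (fun j hj => Function.update_of_ne hj.ne _ _) i hi
  -- apply the Bernstein property
  obtain ⟨a, haX, haK⟩ := (hBernstein K hKperf hKne).1
  obtain ⟨x, rfl⟩ := haK
  -- the point g x lies in W and all G n
  have hmemW : g x ∈ W := (hFInv (br x 0)).2.1 (hmemg x 0)
  have hmemG : ∀ n, g x ∈ G n := by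
    intro n
    have := (hFInv (br x (n + 1))).2.2.1 n (by simp [br_length])
    exact this (hmemg x (n + 1))
  -- the point g x lies in the closure of D
  have hclos : g x ∈ closure D := by
    rw [mem_closure_iff]
    intro O hO haO
    obtain ⟨m, hm⟩ := hbasis O hO _ haO
    refine ⟨(F (br x m)).1, ?_, (hFInv (br x m)).1⟩
    apply hm
    have h1 : (F (br x m)).1 ∈ cylinder (F (br x m)).1 (F (br x m)).2 := self_mem_cylinder _ _
    have h2 : cylinder (F (br x m)).1 (F (br x m)).2 = cylinder (g x) (F (br x m)).2 :=
      (mem_cylinder_iff_eq.mp (hmemg x m)).symm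
    rw [h2] at h1
    exact cylinder_anti _ (by simpa [br_length] using hlen (br x m)) h1
  -- closedness of C gives g x ∈ D
  have hgD : g x ∈ D := by
    obtain ⟨E, hE, hCE⟩ := isClosed_induced_iff.mp hC
    have hDE : D ⊆ E := by
      rintro _ ⟨c, rfl⟩
      have hm : (c : ↥X) ∈ Subtype.val ⁻¹' E := by rw [hCE]; exact c.2
      exact hm
    have hgE : g x ∈ E := hE.closure_subset_iff.mpr hDE hclos
    exact ⟨⟨⟨g x, haX⟩, show (⟨g x, haX⟩ : ↥X) ∈ C by rw [← hCE]; exact hgE⟩, rfl⟩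
  obtain ⟨n, hn⟩ := hdisj (g x) hgD hmemW
  exact hn (hmemG n)
end

section
/- The product (ω+1) × 2^ω of the convergent sequence ω+1 with the Cantor space is homeomorphic to the Cantor space 2^ω; moreover ω+1 itself is not countable dense homogeneous. Consequently, a factor of a countable dense homogeneous product need not be countable dense homogeneous. -/
open OnePoint
open OnePoint
namespace CDHaux

def A (k : ℕ) (x : ℕ → Bool) : Bool := if k % 2 = 0 then true else x (k / 2)

def gn (n k : ℕ) (x : ℕ → Bool) : Bool :=
  if k < 2 * n then A k x else if k = 2 * n then false else x (k - n - 1)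

def g (q : OnePoint ℕ × (ℕ → Bool)) (k : ℕ) : Bool :=
  Option.elim q.1 (A k q.2) (fun n => gn n k q.2)

lemma A_even (i : ℕ) (x : ℕ → Bool) : A (2 * i) x = true := by
  simp [A, Nat.mul_mod_right]

lemma A_odd (i : ℕ) (x : ℕ → Bool) : A (2 * i + 1) x = x i := by
  have h1 : (2 * i + 1) % 2 = 1 := by omega
  have h2 : (2 * i + 1) / 2 = i := by omega
  simp [A, h1, h2]

lemma g_infty_even (x : ℕ → Bool) (i : ℕ) : g (∞, x) (2 * i) = true := A_even i x
lemma g_infty_odd (x : ℕ → Bool) (i : ℕ) : g (∞, x) (2 * i + 1) = x i := A_odd i x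

lemma g_coe_even_lt (n : ℕ) (x : ℕ → Bool) {i : ℕ} (h : i < n) :
    g ((n : OnePoint ℕ), x) (2 * i) = true := by
  show gn n (2 * i) x = true
  rw [gn, if_pos (by omega)]; exact A_even i x

lemma g_coe_diag (n : ℕ) (x : ℕ → Bool) : g ((n : OnePoint ℕ), x) (2 * n) = false := by
  show gn n (2 * n) x = false
  rw [gn, if_neg (by omega), if_pos rfl]

lemma g_coe_odd_lt (n : ℕ) (x : ℕ → Bool) {i : ℕ} (h : i < n) :
    g ((n : OnePoint ℕ), x) (2 * i + 1) = x i := by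
  show gn n (2 * i + 1) x = x i
  rw [gn, if_pos (by omega)]; exact A_odd i x

lemma g_coe_tail (n : ℕ) (x : ℕ → Bool) {i : ℕ} (h : n ≤ i) :
    g ((n : OnePoint ℕ), x) (n + i + 1) = x i := by
  show gn n (n + i + 1) x = x i
  rw [gn, if_neg (by omega), if_neg (by omega)]
  congr 1; omega

lemma g_inj : Function.Injective g := by
  rintro ⟨p, x⟩ ⟨q, y⟩ h
  have hk : ∀ k, g (p, x) k = g (q, y) k := fun k => congrFun h k
  cases p with
  | infty =>
    cases q with
    | infty =>
      have hx : x = y := by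
        funext i
        rw [← g_infty_odd x i, ← g_infty_odd y i]; exact hk _
      rw [hx]
    | coe m =>
      exfalso
      have := hk (2 * m)
      rw [g_infty_even, g_coe_diag] at this
      exact Bool.true_eq_false.mp this
  | coe n =>
    cases q with
    | infty =>
      exfalso
      have := hk (2 * n)
      rw [g_coe_diag, g_infty_even] at this
      exact Bool.false_eq_true.mp this
    | coe m =>
      have hnm : n = m := by
        by_contra hne
        rcases Nat.lt_or_ge n m with hlt | hge
        · have := hk (2 * n); rw [g_coe_diag, g_coe_even_lt m y hlt] at this
          exact Bool.false_eq_true.mp this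
        · have hmn : m < n := by omega
          have := hk (2 * m); rw [g_coe_even_lt n x hmn, g_coe_diag] at this
          exact Bool.true_eq_false.mp this
      subst hnm
      have hx : x = y := by
        funext i
        rcases Nat.lt_or_ge i n with hi | hi
        · rw [← g_coe_odd_lt n x hi, ← g_coe_odd_lt n y hi]; exact hk _
        · rw [← g_coe_tail n x hi, ← g_coe_tail n y hi]; exact hk _
      rw [hx]

lemma g_surj : Function.Surjective g := by
  intro y
  by_cases hall : ∀ i, y (2 * i) = true
  · refine ⟨(∞, fun i => y (2 * i + 1)), funext fun k => ?_⟩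
    show A k _ = y k
    rcases Nat.even_or_odd k with ⟨i, hi⟩ | ⟨i, hi⟩
    · have hk : k = 2 * i := by omega
      subst hk; rw [A_even]; exact (hall i).symm
    · have hk : k = 2 * i + 1 := by omega
      subst hk; rw [A_odd]
  · push_neg at hall
    have hex : ∃ i, y (2 * i) = false := by
      obtain ⟨i, hi⟩ := hall
      exact ⟨i, by simpa using hi⟩
    set n := Nat.find hex with hn
    have hfind : y (2 * n) = false := Nat.find_spec hex
    have hmin : ∀ i < n, y (2 * i) = true := fun i hi => by
      have := Nat.find_min hex hi; simpa using this
    refine ⟨((n : OnePoint ℕ), fun i => if i < n then y (2 * i + 1) else y (n + i + 1)),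
      funext fun k => ?_⟩
    show gn n k _ = y k
    rcases Nat.lt_trichotomy k (2 * n) with hk | hk | hk
    · rw [gn, if_pos hk]
      rcases Nat.even_or_odd k with ⟨i, hi⟩ | ⟨i, hi⟩
      · have hk2 : k = 2 * i := by omega
        subst hk2; rw [A_even]; exact (hmin i (by omega)).symm
      · have hk2 : k = 2 * i + 1 := by omega
        subst hk2; rw [A_odd]
        show (if i < n then y (2 * i + 1) else y (n + i + 1)) = y (2 * i + 1)
        rw [if_pos (by omega)]
    · subst hk; rw [gn, if_neg (by omega), if_pos rfl]; exact hfind.symm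
    · rw [gn, if_neg (by omega), if_neg (by omega)]
      show (if k - n - 1 < n then y (2 * (k - n - 1) + 1) else y (n + (k - n - 1) + 1)) = y k
      rw [if_neg (by omega)]; congr 1; omega


lemma cont_A (k : ℕ) : Continuous fun q : OnePoint ℕ × (ℕ → Bool) => A k q.2 := by
  unfold A
  by_cases h : k % 2 = 0
  · simp only [h, if_true]; exact continuous_const
  · simp only [h, if_false]; exact (continuous_apply (k / 2)).comp continuous_snd

lemma cont_gn (n k : ℕ) : Continuous fun q : OnePoint ℕ × (ℕ → Bool) => gn n k q.2 := by
  unfold gn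
  by_cases h1 : k < 2 * n
  · simp only [h1, if_true]; exact cont_A k
  · simp only [h1, if_false]
    by_cases h2 : k = 2 * n
    · simp only [h2, if_pos rfl]; exact continuous_const
    · simp only [h2, if_false]; exact (continuous_apply (k - n - 1)).comp continuous_snd

def U (k : ℕ) : Set (OnePoint ℕ) := {p | ∀ n : ℕ, p = (n : OnePoint ℕ) → k < 2 * n}

lemma isOpen_U (k : ℕ) : IsOpen (U k) := by
  rw [← isClosed_compl_iff]
  have : (U k)ᶜ = ((↑) : ℕ → OnePoint ℕ) '' {n | ¬ k < 2 * n} := by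
    ext p
    induction p using OnePoint.rec with
    | infty =>
      simp only [Set.mem_compl_iff, U, Set.mem_setOf_eq, Set.mem_image]
      constructor
      · intro h; exact absurd (fun n hn => absurd hn (infty_ne_coe n)) h
      · rintro ⟨n, _, hn⟩; exact absurd hn.symm (infty_ne_coe n)
    | coe m =>
      simp only [Set.mem_compl_iff, U, Set.mem_setOf_eq, Set.mem_image]
      constructor
      · intro h
        refine ⟨m, ?_, rfl⟩
        by_contra hm
        exact h (fun n hn => by rwa [coe_eq_coe.mp hn] at hm)
      · rintro ⟨n, hn, he⟩ h
        exact hn (h n he.symm)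
  rw [this]
  apply Set.Finite.isClosed
  exact (Set.finite_Iic k).subset (fun n hn => by simp at hn ⊢; omega) |>.image _

lemma mem_U_infty (k : ℕ) : (∞ : OnePoint ℕ) ∈ U k :=
  fun n hn => absurd hn (infty_ne_coe n)

lemma g_cont : Continuous g := by
  apply continuous_pi
  intro k
  rw [continuous_iff_continuousAt]
  rintro ⟨p, x⟩
  induction p using OnePoint.rec with
  | infty =>
    apply ContinuousAt.congr ((cont_A k).continuousAt)
    apply Filter.eventuallyEq_of_mem
      (((isOpen_U k).prod isOpen_univ).mem_nhds ⟨mem_U_infty k, trivial⟩)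
    rintro ⟨q, y⟩ ⟨hq, -⟩
    induction q using OnePoint.rec with
    | infty => rfl
    | coe n =>
      show A k y = gn n k y
      rw [gn, if_pos (hq n rfl)]
  | coe n =>
    apply ContinuousAt.congr ((cont_gn n k).continuousAt)
    have hopen : IsOpen ({(n : OnePoint ℕ)} ×ˢ (Set.univ : Set (ℕ → Bool))) := by
      apply IsOpen.prod _ isOpen_univ
      have := isOpenEmbedding_coe (X := ℕ)
      simpa using this.isOpenMap {n} (isOpen_discrete _)
    apply Filter.eventuallyEq_of_mem (hopen.mem_nhds ⟨Set.mem_singleton _, trivial⟩)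
    rintro ⟨q, y⟩ ⟨hq, -⟩
    simp only [Set.mem_singleton_iff] at hq
    subst hq
    rfl


lemma g_bij : Function.Bijective g := ⟨g_inj, g_surj⟩

noncomputable def theHomeo : (OnePoint ℕ × (ℕ → Bool)) ≃ₜ (ℕ → Bool) :=
  Continuous.homeoOfEquivCompactToT2 (f := Equiv.ofBijective g g_bij) g_cont

end CDHaux

lemma not_cdh_onePoint : ¬ CDH (OnePoint ℕ) := by
  intro h
  have hcnt : Countable (OnePoint ℕ) := inferInstanceAs (Countable (Option ℕ))
  obtain ⟨e, he⟩ := h (Set.range ((↑) : ℕ → OnePoint ℕ)) Set.univ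
    (Set.countable_range _) OnePoint.denseRange_coe (Set.countable_univ) dense_univ
  have : Set.range ((↑) : ℕ → OnePoint ℕ) = Set.univ := by
    have h2 := congrArg (fun s => e.symm '' s) he
    simpa [Set.image_image] using h2
  have : (∞ : OnePoint ℕ) ∈ Set.range ((↑) : ℕ → OnePoint ℕ) := this ▸ Set.mem_univ _
  obtain ⟨n, hn⟩ := this
  exact OnePoint.infty_ne_coe n hn.symm

/-- `(ω+1) × 2^ω` is homeomorphic to the Cantor set (which is CDH), while `ω+1`
itself is not CDH: a factor of a CDH product need not be CDH. -/
theorem factor_of_cdh_product_need_not_be_cdh :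
    Nonempty ((OnePoint ℕ × (ℕ → Bool)) ≃ₜ (ℕ → Bool)) ∧ ¬ CDH (OnePoint ℕ) := by
  exact ⟨⟨CDHaux.theHomeo⟩, not_cdh_onePoint⟩
end

section
/- Let λ be an infinite cardinal and let A be a λ-dense subset of the Cantor space 2^ω, i.e. |A ∩ U| = λ for every nonempty open subset U of 2^ω. Then A can be partitioned into λ many pairwise disjoint sets, each of which is a countable dense subset of 2^ω. -/
open Cardinal Set

namespace LambdaDenseAux

/-- The sequence extending a finite list by `false`. -/
def toSeq (s : List Bool) : ℕ → Bool := fun i => s.getD i false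

/-- The cylinder determined by a finite list. -/
def cyl (s : List Bool) : Set (ℕ → Bool) := PiNat.cylinder (toSeq s) s.length

lemma isOpen_cyl (s : List Bool) : IsOpen (cyl s) :=
  PiNat.isOpen_cylinder _ _ _

lemma nonempty_cyl (s : List Bool) : (cyl s).Nonempty :=
  ⟨toSeq s, PiNat.self_mem_cylinder _ _⟩

lemma cyl_ofFn (x : ℕ → Bool) (n : ℕ) :
    cyl (List.ofFn fun i : Fin n => x i) = PiNat.cylinder x n := by
  ext y
  simp only [cyl, PiNat.mem_cylinder_iff, List.length_ofFn]
  refine forall₂_congr fun i hi => ?_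
  have h1 : i < (List.ofFn fun i : Fin n => x i).length := by simpa using hi
  rw [toSeq, List.getD_eq_getElem _ _ h1, List.getElem_ofFn]

end LambdaDenseAux

open LambdaDenseAux in
open Cardinal in
/-- A `λ`-dense subset of the Cantor set (for `λ` an infinite cardinal) can be
partitioned into `λ` many pairwise disjoint countable dense subsets. -/
theorem lambda_dense_partition (lam : Cardinal.{0}) (hlam : Cardinal.aleph0 ≤ lam)
    (A : Set (ℕ → Bool))
    (hA : ∀ U : Set (ℕ → Bool), IsOpen U → U.Nonempty → Cardinal.mk ↥(A ∩ U) = lam) :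
    ∃ (ι : Type) (D : ι → Set (ℕ → Bool)),
      Cardinal.mk ι = lam ∧
      Pairwise (fun i j => Disjoint (D i) (D j)) ∧
      (⋃ i, D i) = A ∧
      ∀ i, (D i).Countable ∧ Dense (D i) := by
  classical
  have hcyl : ∀ s : List Bool, Cardinal.mk ↥(A ∩ cyl s) = lam := fun s =>
    hA _ (isOpen_cyl s) (nonempty_cyl s)
  set K := lam.ord.ToType with hKdef
  have hK : Cardinal.mk K = lam := by rw [mk_toType, card_ord]
  have hKne : Nonempty K := by
    rw [← Cardinal.mk_ne_zero_iff, hK]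
    exact fun h => Cardinal.aleph0_ne_zero (le_antisymm (h ▸ hlam) zero_le)
  have hKL : Cardinal.mk (K × List Bool) = lam := by
    rw [Cardinal.mk_prod, Cardinal.lift_id, Cardinal.lift_id, hK,
      Cardinal.mk_list_eq_aleph0, Cardinal.mul_aleph0_eq hlam]
  -- a bijection `K ≃ K × List Bool`
  obtain ⟨b⟩ : Nonempty (K ≃ (K × List Bool)) := Cardinal.eq.mp (hK.trans hKL.symm)
  -- key existence statement allowing a well-founded recursive choice
  have key : ∀ (k : K) (g : ∀ j, j < k → (ℕ → Bool)),
      ∃ x : ℕ → Bool, (x ∈ A ∧ x ∈ cyl (b k).2) ∧ ∀ j hj, x ≠ g j hj := by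
    intro k g
    set T : Set (ℕ → Bool) := Set.range (fun j : ↥(Set.Iio k) => g j j.2) with hTdef
    have hT : Cardinal.mk T < lam :=
      lt_of_le_of_lt Cardinal.mk_range_le (Cardinal.mk_Iio_ord_toType k)
    have hns : ¬ (A ∩ cyl (b k).2 ⊆ T) := by
      intro hsub
      exact absurd ((hcyl (b k).2) ▸ Cardinal.mk_le_mk_of_subset hsub) (not_le.mpr hT)
    obtain ⟨x, hx, hxT⟩ := Set.not_subset.mp hns
    exact ⟨x, ⟨hx.1, hx.2⟩, fun j hj hEq => hxT ⟨⟨j, hj⟩, hEq.symm⟩⟩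
  have wf : WellFounded ((· < ·) : K → K → Prop) := wellFounded_lt
  set f : K → (ℕ → Bool) := wf.fix (fun k ih => (key k ih).choose) with hfdef
  have hf : ∀ k, f k = (key k (fun j _ => f j)).choose := fun k =>
    wf.fix_eq _ k
  have hfA : ∀ k, f k ∈ A := fun k => by
    rw [hf k]; exact (key k _).choose_spec.1.1
  have hfcyl : ∀ k, f k ∈ cyl (b k).2 := fun k => by
    rw [hf k]; exact (key k _).choose_spec.1.2
  have hfne : ∀ j k, j < k → f k ≠ f j := fun j k hjk => by
    rw [hf k]; exact (key k _).choose_spec.2 j hjk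
  have hfinj : Function.Injective f := by
    intro j k h
    by_contra hne
    rcases lt_or_gt_of_ne hne with hlt | hlt
    · exact hfne j k hlt h.symm
    · exact hfne k j hlt h
  -- leftover points
  set R : Set (ℕ → Bool) := A \ Set.range f with hRdef
  have hRcard : Cardinal.mk R ≤ Cardinal.mk K := by
    rw [hK]
    calc Cardinal.mk R ≤ Cardinal.mk A := Cardinal.mk_le_mk_of_subset diff_subset
    _ = lam := by
        have := hA univ isOpen_univ ⟨fun _ => false, trivial⟩
        rwa [inter_univ] at this
  obtain ⟨r⟩ : Nonempty (↥R ↪ K) := Cardinal.le_def _ _ |>.mp hRcard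
  -- the partition
  refine ⟨K, fun i => f '' {k | (b k).1 = i} ∪ {x | ∃ h : x ∈ R, r ⟨x, h⟩ = i},
    hK, ?_, ?_, ?_⟩
  · -- pairwise disjoint
    intro i j hij
    rw [Set.disjoint_left]
    rintro x (⟨k, hk, rfl⟩ | ⟨hxR, hxr⟩) hxj
    · rcases hxj with ⟨k', hk', hkk'⟩ | ⟨hxR, _⟩
      · exact hij (hk ▸ hk' ▸ congrArg (fun k => (b k).1) (hfinj hkk').symm)
      · exact hxR.2 ⟨k, rfl⟩
    · rcases hxj with ⟨k', _, hkk'⟩ | ⟨hxR', hxr'⟩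
      · exact hxR.2 (hkk' ▸ ⟨k', rfl⟩)
      · exact hij (hxr ▸ hxr' ▸ rfl)
  · -- union is A
    apply Set.Subset.antisymm
    · rintro x hx
      simp only [Set.mem_iUnion] at hx
      obtain ⟨i, ⟨k, _, rfl⟩ | ⟨hxR, _⟩⟩ := hx
      · exact hfA k
      · exact hxR.1
    · intro x hx
      by_cases hxr : x ∈ Set.range f
      · obtain ⟨k, rfl⟩ := hxr
        exact Set.mem_iUnion.mpr ⟨(b k).1, Or.inl ⟨k, rfl, rfl⟩⟩
      · have hxR : x ∈ R := ⟨hx, hxr⟩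
        exact Set.mem_iUnion.mpr ⟨r ⟨x, hxR⟩, Or.inr ⟨hxR, rfl⟩⟩
  · -- countable and dense
    intro i
    constructor
    · apply Set.Countable.union
      · apply Set.Countable.image
        rw [Set.countable_iff_exists_injective]
        refine ⟨fun k => Encodable.encode (b k.1).2, ?_⟩
        intro k k' hkk'
        have h2 : (b k.1).2 = (b k'.1).2 := Encodable.encode_injective hkk'
        have h1 : (b k.1).1 = (b k'.1).1 := k.2.trans k'.2.symm
        have : b k.1 = b k'.1 := Prod.ext h1 h2
        exact Subtype.ext (b.injective this)
      · apply Set.Subsingleton.countable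
        rintro x ⟨hx, hxi⟩ y ⟨hy, hyi⟩
        have : r ⟨x, hx⟩ = r ⟨y, hy⟩ := hxi.trans hyi.symm
        exact congrArg Subtype.val (r.injective this)
    · rw [(PiNat.isTopologicalBasis_cylinders (fun _ : ℕ => Bool)).dense_iff]
      rintro o ⟨x, n, rfl⟩ -
      obtain ⟨k, hk⟩ := b.surjective (i, List.ofFn fun i : Fin n => x i)
      have h1 : f k ∈ PiNat.cylinder x n := by
        have := hfcyl k
        rwa [hk, cyl_ofFn] at this
      refine ⟨f k, h1, Or.inl ⟨k, ?_, rfl⟩⟩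
      simp [hk]
end

section
/- Let Q be a countable dense subset of the Cantor space 2^ω, let T be a Gδ subset of 2^ω × 2^ω with Q × Q ⊆ T, and let g : T → T be a homeomorphism of the subspace T onto itself such that the map sending (x,y) ∈ Q × Q to the first coordinate π₀(g(x,y)) of g(x,y) is injective on Q × Q. Then for every homeomorphism h of 2^ω and each i ∈ {0,1}, the set C_h^i = {(x,y) ∈ T : h(π_i(x,y)) = π₀(g(x,y))} is closed and nowhere dense in the subspace T. -/
/-- In Cantor space, every nonempty open set contains a point different from any
given point of it (no isolated points). -/
private lemma cantor_exists_ne {W : Set (ℕ → Bool)} (hW : IsOpen W) {y : ℕ → Bool}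
    (hy : y ∈ W) : ∃ y' ∈ W, y' ≠ y := by
  obtain ⟨I, u, hu, hsub⟩ := isOpen_pi_iff.mp hW y hy
  obtain ⟨n, hn⟩ := Infinite.exists_notMem_finset I
  refine ⟨Function.update y n (!y n), hsub fun i hi => ?_, ?_⟩
  · rw [Function.update_of_ne (by rintro rfl; exact hn hi)]
    exact (hu i hi).2
  · intro hEq
    have := congrFun hEq n
    simp [Function.update_self] at this

/-- A point of `Q` near a given point inside an open set, distinct from that point. -/
private lemma cantor_exists_ne_mem {Q : Set (ℕ → Bool)} (hQd : Dense Q)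
    {W : Set (ℕ → Bool)} (hW : IsOpen W) {y : ℕ → Bool} (hy : y ∈ W) :
    ∃ y' ∈ Q, y' ∈ W ∧ y' ≠ y := by
  obtain ⟨z, hzW, hzne⟩ := cantor_exists_ne hW hy
  have hopen : IsOpen (W \ {y}) := hW.sdiff isClosed_singleton
  obtain ⟨y', hy'Q, hy'mem⟩ := hQd.exists_mem_open hopen ⟨z, hzW, hzne⟩
  exact ⟨y', hy'Q, hy'mem.1, hy'mem.2⟩

/-- If `g : T → T` is a homeomorphism of a Gδ subset `T ⊇ Q × Q` of `2^ω × 2^ω`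
such that `(x,y) ↦ π₀(g(x,y))` is injective on `Q × Q` (with `Q` countable dense),
then for every homeomorphism `h` of `2^ω` and each `i ∈ {0,1}`, the set
`C_h^i = {(x,y) ∈ T : h(π_i(x,y)) = π₀(g(x,y))}` is closed and nowhere dense in `T`. -/
theorem killing_sets_closed_nowhere_dense
    (Q : Set (ℕ → Bool)) (hQc : Q.Countable) (hQd : Dense Q)
    (T : Set ((ℕ → Bool) × (ℕ → Bool))) (hT : IsGδ T) (hQT : Q ×ˢ Q ⊆ T)
    (g : ↥T ≃ₜ ↥T)
    (hinj : Set.InjOn (fun p : ↥T => ((g p : ↥T) : (ℕ → Bool) × (ℕ → Bool)).1)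
      {p : ↥T | (p : (ℕ → Bool) × (ℕ → Bool)) ∈ Q ×ˢ Q}) :
    ∀ (h : (ℕ → Bool) ≃ₜ (ℕ → Bool)) (i : Fin 2),
      IsClosed {p : ↥T | h (if i = 0 then (p : (ℕ → Bool) × (ℕ → Bool)).1
          else (p : (ℕ → Bool) × (ℕ → Bool)).2) = ((g p : ↥T) : (ℕ → Bool) × (ℕ → Bool)).1} ∧
      IsNowhereDense {p : ↥T | h (if i = 0 then (p : (ℕ → Bool) × (ℕ → Bool)).1
          else (p : (ℕ → Bool) × (ℕ → Bool)).2) = ((g p : ↥T) : (ℕ → Bool) × (ℕ → Bool)).1} := by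
  intro h i
  have hgc : Continuous fun p : ↥T => ((g p : ↥T) : (ℕ → Bool) × (ℕ → Bool)).1 :=
    continuous_fst.comp (continuous_subtype_val.comp g.continuous)
  -- the set of elements of T with both coordinates in Q is dense in T
  have hS : Dense {p : ↥T | (p : (ℕ → Bool) × (ℕ → Bool)) ∈ Q ×ˢ Q} := by
    rw [dense_iff_inter_open]
    rintro U hU ⟨p, hp⟩
    obtain ⟨V, hV, rfl⟩ := isOpen_induced_iff.mp hU
    obtain ⟨q, hqQ, hqV⟩ := (hQd.prod hQd).exists_mem_open hV ⟨(p : _), hp⟩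
    exact ⟨⟨q, hQT hqQ⟩, hqV, hqQ⟩
  set C := {p : ↥T | h (if i = 0 then (p : (ℕ → Bool) × (ℕ → Bool)).1
      else (p : (ℕ → Bool) × (ℕ → Bool)).2) = ((g p : ↥T) : (ℕ → Bool) × (ℕ → Bool)).1} with hCdef
  have hCclosed : IsClosed C := by
    apply isClosed_eq
    · by_cases hi : i = 0
      · simp only [hi, if_pos rfl]
        exact h.continuous.comp (continuous_fst.comp continuous_subtype_val)
      · simp only [if_neg hi]
        exact h.continuous.comp (continuous_snd.comp continuous_subtype_val)
    · exact hgc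
  refine ⟨hCclosed, ?_⟩
  rw [hCclosed.isNowhereDense_iff]
  rw [Set.eq_empty_iff_forall_notMem]
  intro p hp
  -- get a point of Q × Q in the interior of C
  obtain ⟨q, hqI, hqQ⟩ := dense_iff_inter_open.mp hS (interior C) isOpen_interior ⟨p, hp⟩
  obtain ⟨V, hV, hVeq⟩ := isOpen_induced_iff.mp (isOpen_interior : IsOpen (interior C))
  have hqV : (q : (ℕ → Bool) × (ℕ → Bool)) ∈ V := by
    rw [← hVeq] at hqI; exact hqI
  obtain ⟨W₁, W₂, hW₁, hW₂, hx, hy, hWV⟩ :=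
    isOpen_prod_iff.mp hV (q : (ℕ → Bool) × (ℕ → Bool)).1 (q : (ℕ → Bool) × (ℕ → Bool)).2 hqV
  have hqC : q ∈ C := interior_subset hqI
  have hq1Q : (q : (ℕ → Bool) × (ℕ → Bool)).1 ∈ Q := hqQ.1
  have hq2Q : (q : (ℕ → Bool) × (ℕ → Bool)).2 ∈ Q := hqQ.2
  by_cases hi : i = 0
  · -- vary the second coordinate
    obtain ⟨y', hy'Q, hy'W, hy'ne⟩ := cantor_exists_ne_mem hQd hW₂ hy
    have hp'Q : ((q : (ℕ → Bool) × (ℕ → Bool)).1, y') ∈ Q ×ˢ Q := ⟨hq1Q, hy'Q⟩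
    set p' : ↥T := ⟨((q : (ℕ → Bool) × (ℕ → Bool)).1, y'), hQT hp'Q⟩ with hp'def
    have hp'I : p' ∈ interior C := by
      rw [← hVeq]
      exact hWV ⟨hx, hy'W⟩
    have hp'C : p' ∈ C := interior_subset hp'I
    simp only [hCdef, Set.mem_setOf_eq, hi, eq_self_iff_true, ite_true] at hqC hp'C
    have heq : ((g q : ↥T) : (ℕ → Bool) × (ℕ → Bool)).1
        = ((g p' : ↥T) : (ℕ → Bool) × (ℕ → Bool)).1 := by
      rw [← hqC, ← hp'C]
    have : q = p' := hinj hqQ hp'Q heq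
    have : (q : (ℕ → Bool) × (ℕ → Bool)).2 = y' := by rw [this]
    exact hy'ne this.symm
  · -- vary the first coordinate
    obtain ⟨x', hx'Q, hx'W, hx'ne⟩ := cantor_exists_ne_mem hQd hW₁ hx
    have hp'Q : (x', (q : (ℕ → Bool) × (ℕ → Bool)).2) ∈ Q ×ˢ Q := ⟨hx'Q, hq2Q⟩
    set p' : ↥T := ⟨(x', (q : (ℕ → Bool) × (ℕ → Bool)).2), hQT hp'Q⟩ with hp'def
    have hp'I : p' ∈ interior C := by
      rw [← hVeq]
      exact hWV ⟨hx'W, hy⟩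
    have hp'C : p' ∈ C := interior_subset hp'I
    simp only [hCdef, Set.mem_setOf_eq, if_neg hi] at hqC hp'C
    have heq : ((g q : ↥T) : (ℕ → Bool) × (ℕ → Bool)).1
        = ((g p' : ↥T) : (ℕ → Bool) × (ℕ → Bool)).1 := by
      rw [← hqC, ← hp'C]
    have : q = p' := hinj hqQ hp'Q heq
    have : (q : (ℕ → Bool) × (ℕ → Bool)).1 = x' := by rw [this]
    exact hx'ne this.symm
end

section
/- Let X be a separable metrizable space without isolated points. Then there exists a countable dense subset D of X × X such that the restriction of the first-coordinate projection π₀ to D is injective. -/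
open TopologicalSpace Set Topology

/-- In a T1 space where no singleton is open, any nonempty open set of the square
contains a point whose first coordinate avoids a given finite set. -/
lemma exists_mem_fst_notMem
    (X : Type*) [TopologicalSpace X] [T1Space X]
    (hiso : ∀ x : X, ¬ IsOpen ({x} : Set X))
    (U : Set (X × X)) (hU : IsOpen U) (hne : U.Nonempty)
    (s : Finset X) : ∃ p : X × X, p ∈ U ∧ p.1 ∉ (s : Set X) := by
  have hopen : IsOpen (Prod.fst '' U) := isOpenMap_fst U hU
  obtain ⟨p, hp⟩ := hne
  haveI : Filter.NeBot (𝓝[≠] p.1) := by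
    rw [Filter.neBot_iff]
    intro h
    exact hiso p.1 (isOpen_singleton_iff_punctured_nhds p.1 |>.2 h)
  have hinf : (Prod.fst '' U).Infinite :=
    infinite_of_mem_nhds p.1 (hopen.mem_nhds ⟨p, hp, rfl⟩)
  obtain ⟨x, hxU, hxs⟩ := (hinf.diff s.finite_toSet).nonempty
  obtain ⟨q, hqU, hq1⟩ := hxU
  exact ⟨q, hqU, by rwa [hq1]⟩

/-- In the square of a separable metrizable space without isolated points there
is a countable dense subset on which the first-coordinate projection is injective. -/
theorem exists_countable_dense_injective_projection
    (X : Type*) [TopologicalSpace X] [TopologicalSpace.SeparableSpace X]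
    [TopologicalSpace.MetrizableSpace X]
    (hiso : ∀ x : X, ¬ IsOpen ({x} : Set X)) :
    ∃ D : Set (X × X), D.Countable ∧ Dense D ∧ Set.InjOn Prod.fst D := by
  letI := metrizableSpaceMetric X
  haveI : SecondCountableTopology X := UniformSpace.secondCountable_of_separable X
  haveI : SecondCountableTopology (X × X) := inferInstance
  by_cases hE : IsEmpty X
  · refine ⟨∅, countable_empty, ?_, fun a ha => absurd ha (notMem_empty a)⟩
    haveI : IsEmpty (X × X) := inferInstance
    intro x; exact (IsEmpty.false x).elim
  · haveI : Nonempty X := not_isEmpty_iff.mp hE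
    obtain ⟨b, hbc, hbne, hbasis⟩ := exists_countable_basis (X × X)
    have hbnonempty : b.Nonempty := by
      rcases hbasis.exists_subset_of_mem_open (mem_univ (Classical.arbitrary (X × X)))
        isOpen_univ with ⟨o, ho, -, -⟩
      exact ⟨o, ho⟩
    obtain ⟨e, he⟩ := hbc.exists_eq_range hbnonempty
    have heb : ∀ n, e n ∈ b := fun n => he ▸ mem_range_self n
    have heo : ∀ n, IsOpen (e n) := fun n => hbasis.isOpen (heb n)
    have hene : ∀ n, (e n).Nonempty := fun n =>
      nonempty_iff_ne_empty.2 fun h => hbne (h ▸ heb n)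
    have hpick : ∀ (n : ℕ) (s : Finset X), ∃ p : X × X, p ∈ e n ∧ p.1 ∉ (s : Set X) :=
      fun n s => exists_mem_fst_notMem X hiso (e n) (heo n) (hene n) s
    haveI := Classical.decEq X
    choose pick hpick1 hpick2 using hpick
    let used : ℕ → Finset X := fun n => Nat.rec ∅ (fun k ih => insert (pick k ih).1 ih) n
    let f : ℕ → X × X := fun n => pick n (used n)
    have hused_succ : ∀ n, used (n + 1) = insert (f n).1 (used n) := fun n => rfl
    have hmem : ∀ m n, m < n → (f m).1 ∈ used n := by
      intro m n hmn
      induction n with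
      | zero => omega
      | succ k ih =>
        rw [hused_succ]
        rcases Nat.lt_succ_iff_lt_or_eq.mp hmn with h | h
        · exact Finset.mem_insert_of_mem (ih h)
        · subst h; exact Finset.mem_insert_self _ _
    have hne : ∀ m n, m < n → (f m).1 ≠ (f n).1 := by
      intro m n hmn h
      exact hpick2 n (used n) (h ▸ hmem m n hmn)
    refine ⟨range f, countable_range f, ?_, ?_⟩
    · rw [hbasis.dense_iff]
      intro o ho _
      rw [he] at ho
      obtain ⟨n, rfl⟩ := ho
      exact ⟨f n, hpick1 n (used n), mem_range_self n⟩
    · rintro p ⟨m, rfl⟩ q ⟨n, rfl⟩ h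
      rcases lt_trichotomy m n with hmn | hmn | hmn
      · exact absurd h (hne m n hmn)
      · rw [hmn]
      · exact absurd h.symm (hne n m hmn)
end

section
/- The Cantor space 2^ω and the Baire space ω^ω are countable dense homogeneous: for every pair (A,B) of countable dense subsets of 2^ω (respectively ω^ω) there exists a homeomorphism h of 2^ω (respectively ω^ω) such that h[A]=B. -/
namespace CDHAux

variable {D : Type*}

/-- Two sequences agree on the first `n` coordinates. -/
def Agree (n : ℕ) (x y : ℕ → D) : Prop := ∀ k < n, x k = y k

lemma Agree.rfl {n : ℕ} {x : ℕ → D} : Agree n x x := fun _ _ => Eq.refl _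

lemma Agree.symm {n} {x y : ℕ → D} (h : Agree n x y) : Agree n y x :=
  fun k hk => (h k hk).symm

lemma Agree.trans {n} {x y z : ℕ → D} (h : Agree n x y) (h' : Agree n y z) : Agree n x z :=
  fun k hk => (h k hk).trans (h' k hk)

lemma Agree.mono {m n} {x y : ℕ → D} (hmn : m ≤ n) (h : Agree n x y) : Agree m x y :=
  fun k hk => h k (lt_of_lt_of_le hk hmn)

lemma agree_symm_iff {n} {x y : ℕ → D} : Agree n x y ↔ Agree n y x :=
  ⟨Agree.symm, Agree.symm⟩

/-- A coherent set of matched pairs: matched pairs agree on first coordinates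
exactly when their partners do. -/
def Coh (R : Set ((ℕ → D) × (ℕ → D))) : Prop :=
  ∀ p ∈ R, ∀ q ∈ R, ∀ n : ℕ, (Agree n p.1 q.1 ↔ Agree n p.2 q.2)

def swapR (R : Set ((ℕ → D) × (ℕ → D))) : Set ((ℕ → D) × (ℕ → D)) := Prod.swap '' R

lemma swapR_swapR (R : Set ((ℕ → D) × (ℕ → D))) : swapR (swapR R) = R := by
  simp [swapR, Set.image_image]

lemma mem_swapR {R : Set ((ℕ → D) × (ℕ → D))} {p : (ℕ → D) × (ℕ → D)} (hp : p ∈ R) :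
    p.swap ∈ swapR R := ⟨p, hp, Eq.refl _⟩

lemma Coh.swap {R : Set ((ℕ → D) × (ℕ → D))} (h : Coh R) : Coh (swapR R) := by
  rintro p ⟨p', hp', rfl⟩ q ⟨q', hq', rfl⟩ n
  exact (h p' hp' q' hq' n).symm

section Topology

variable [TopologicalSpace D] [DiscreteTopology D]

lemma isOpen_agree (n : ℕ) (w : ℕ → D) : IsOpen {y : ℕ → D | Agree n w y} := by
  have : {y : ℕ → D | Agree n w y} = ⋂ k : Fin n, (fun y : ℕ → D => y k) ⁻¹' {w k} := by
    ext y
    simp only [Set.mem_setOf_eq, Set.mem_iInter, Set.mem_preimage, Set.mem_singleton_iff]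
    exact ⟨fun h k => (h k k.2).symm, fun h k hk => (h ⟨k, hk⟩).symm⟩
  rw [this]
  exact isOpen_iInter_of_finite fun k =>
    (continuous_apply (k : ℕ)).isOpen_preimage _ (isOpen_discrete _)

end Topology

variable [Nonempty D]

open Classical in
noncomputable def pick2 (R : Set ((ℕ → D) × (ℕ → D))) (n : ℕ) (s : Fin n → D) :
    (ℕ → D) × (ℕ → D) :=
  if h : ∃ p ∈ R, ∀ k : Fin n, p.1 k = s k then h.choose else Classical.arbitrary _

lemma pick2_spec {R : Set ((ℕ → D) × (ℕ → D))} {n : ℕ} {s : Fin n → D}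
    (h : ∃ p ∈ R, ∀ k : Fin n, p.1 k = s k) :
    pick2 R n s ∈ R ∧ ∀ k : Fin n, (pick2 R n s).1 k = s k := by
  rw [pick2, dif_pos h]
  exact ⟨h.choose_spec.1, h.choose_spec.2⟩

/-- The map induced by a coherent matching. -/
noncomputable def Fmap (R : Set ((ℕ → D) × (ℕ → D))) (x : ℕ → D) (n : ℕ) : D :=
  (pick2 R (n + 1) (fun k => x k)).2 n

lemma fmap_agree {R : Set ((ℕ → D) × (ℕ → D))} (hInv : Coh R) {x : ℕ → D}
    {p : (ℕ → D) × (ℕ → D)} {n : ℕ} (hp : p ∈ R) (hx : Agree n x p.1) :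
    Agree n (Fmap R x) p.2 := by
  intro k hk
  have hx' : Agree (k + 1) x p.1 := hx.mono hk
  have hex : ∃ q ∈ R, ∀ i : Fin (k + 1), q.1 i = x i :=
    ⟨p, hp, fun i => (hx' i i.2).symm⟩
  obtain ⟨hqR, hqs⟩ := pick2_spec hex
  have h1 : Agree (k + 1) (pick2 R (k + 1) (fun i => x i)).1 p.1 :=
    fun i hi => (hqs ⟨i, hi⟩).trans (hx' i hi)
  have h2 : Agree (k + 1) (pick2 R (k + 1) (fun i => x i)).2 p.2 :=
    (hInv _ hqR p hp (k + 1)).mp h1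
  exact h2 k (Nat.lt_succ_self k)

lemma fmap_eq {R : Set ((ℕ → D) × (ℕ → D))} (hInv : Coh R)
    {p : (ℕ → D) × (ℕ → D)} (hp : p ∈ R) : Fmap R p.1 = p.2 := by
  funext n
  exact fmap_agree hInv hp (Agree.rfl) n (Nat.lt_succ_self n)

lemma fmap_leftInv {R : Set ((ℕ → D) × (ℕ → D))} (hInv : Coh R)
    (hexDom : ∀ (x : ℕ → D) (n : ℕ), ∃ p ∈ R, Agree n x p.1) (x : ℕ → D) :
    Fmap (swapR R) (Fmap R x) = x := by
  funext n
  obtain ⟨p, hp, hxp⟩ := hexDom x (n + 1)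
  have hF : Agree (n + 1) (Fmap R x) p.2 := fmap_agree hInv hp hxp
  have hswap : Agree (n + 1) (Fmap (swapR R) (Fmap R x)) p.swap.2 :=
    fmap_agree hInv.swap (mem_swapR hp) hF
  exact (hswap n (Nat.lt_succ_self n)).trans (hxp n (Nat.lt_succ_self n)).symm

lemma fmap_continuous [TopologicalSpace D] [DiscreteTopology D]
    (R : Set ((ℕ → D) × (ℕ → D))) : Continuous (Fmap R) := by
  refine continuous_pi fun n => ?_
  have : (fun x : ℕ → D => Fmap R x n) =
      (fun s : Fin (n + 1) → D => (pick2 R (n + 1) s).2 n) ∘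
        (fun (x : ℕ → D) (k : Fin (n + 1)) => x k) := rfl
  rw [this]
  exact continuous_of_discreteTopology.comp (continuous_pi fun k => continuous_apply _)

/-- The extension ("forth") lemma. -/
lemma forth {B : Set (ℕ → D)} [TopologicalSpace D] [DiscreteTopology D] (hB : Dense B)
    (P : Finset ((ℕ → D) × (ℕ → D))) (hne : P.Nonempty)
    (hPB : ∀ p ∈ P, p.2 ∈ B) (hInv : Coh (P : Set ((ℕ → D) × (ℕ → D)))) (a : ℕ → D) :
    ∃ b ∈ B, Coh (insert (a, b) (P : Set ((ℕ → D) × (ℕ → D)))) := by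
  classical
  by_cases hmem : ∃ p ∈ P, p.1 = a
  · obtain ⟨p, hp, hpa⟩ := hmem
    refine ⟨p.2, hPB p hp, ?_⟩
    have h1 : ((a, p.2) : (ℕ → D) × (ℕ → D)) = p := by
      rw [← hpa]
    have h2 : insert p (P : Set ((ℕ → D) × (ℕ → D))) = (P : Set ((ℕ → D) × (ℕ → D))) :=
      Set.insert_eq_self.mpr hp
    rw [h1, h2]
    exact hInv
  · push_neg at hmem
    -- bound on agreement lengths
    have hbd : ∀ p : (ℕ → D) × (ℕ → D), ∃ N, ∀ n, p ∈ P → Agree n a p.1 → n ≤ N := by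
      intro p
      by_cases hp : p ∈ P
      · have hne' : a ≠ p.1 := Ne.symm (hmem p hp)
        obtain ⟨k, hk⟩ := Function.ne_iff.mp hne'
        exact ⟨k, fun n _ hag => by
          by_contra h
          exact hk (hag k (lt_of_not_ge h))⟩
      · exact ⟨0, fun n hn _ => absurd hn hp⟩
    choose N hN using hbd
    set NB := P.sup N with hNB
    set Q : ℕ → Prop := fun n => ∃ p ∈ P, Agree n a p.1 with hQ
    have hQbd : ∀ n, Q n → n ≤ NB := by
      rintro n ⟨p, hp, hag⟩
      exact le_trans (hN p n hp hag) (Finset.le_sup hp)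
    have hQ0 : Q 0 := ⟨hne.choose, hne.choose_spec, fun k hk => absurd hk (Nat.not_lt_zero k)⟩
    set M := Nat.findGreatest Q NB with hM
    have hQM : Q M := Nat.findGreatest_spec (Nat.zero_le _) hQ0
    have hQM1 : ¬ Q (M + 1) := by
      by_cases hle : M + 1 ≤ NB
      · exact Nat.findGreatest_is_greatest (Nat.lt_succ_self M) hle
      · exact fun h => hle (hQbd _ h)
    obtain ⟨p₀, hp₀P, hp₀⟩ := hQM
    -- excluded values at coordinate M
    set E : Finset D := (P.filter (fun p => Agree M a p.1)).image (fun p => p.2 M) with hE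
    -- an injection from E avoiding a M
    set ψ : D → D := fun d =>
      if h : ∃ p, p ∈ P ∧ Agree M a p.1 ∧ p.2 M = d then h.choose.1 M else a M with hψ
    have hψspec : ∀ d ∈ E, ∃ p ∈ P, Agree M a p.1 ∧ p.2 M = d ∧ ψ d = p.1 M := by
      intro d hd
      simp only [hE, Finset.mem_image, Finset.mem_filter] at hd
      obtain ⟨p, ⟨hpP, hpag⟩, hpd⟩ := hd
      have h : ∃ p, p ∈ P ∧ Agree M a p.1 ∧ p.2 M = d := ⟨p, hpP, hpag, hpd⟩
      refine ⟨h.choose, h.choose_spec.1, h.choose_spec.2.1, h.choose_spec.2.2, ?_⟩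
      simp only [hψ, dif_pos h]
    -- key: pairs through the node with same output coordinate have same input coordinate
    have hkey : ∀ p ∈ P, ∀ q ∈ P, Agree M a p.1 → Agree M a q.1 →
        (p.2 M = q.2 M ↔ p.1 M = q.1 M) := by
      intro p hp q hq hpa hqa
      have h1 : Agree M p.1 q.1 := hpa.symm.trans hqa
      have h2 : Agree M p.2 q.2 := (hInv p hp q hq M).mp h1
      constructor
      · intro h
        have : Agree (M + 1) p.2 q.2 := by
          intro k hk
          rcases Nat.lt_succ_iff_lt_or_eq.mp hk with hk' | hk'
          · exact h2 k hk'
          · subst hk'; exact h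
        have := (hInv p hp q hq (M + 1)).mpr this
        exact this M (Nat.lt_succ_self M)
      · intro h
        have : Agree (M + 1) p.1 q.1 := by
          intro k hk
          rcases Nat.lt_succ_iff_lt_or_eq.mp hk with hk' | hk'
          · exact h1 k hk'
          · subst hk'; exact h
        have := (hInv p hp q hq (M + 1)).mp this
        exact this M (Nat.lt_succ_self M)
    have hψne : ∀ d ∈ E, ψ d ≠ a M := by
      intro d hd h
      obtain ⟨p, hpP, hpag, hpd, hpψ⟩ := hψspec d hd
      apply hQM1
      refine ⟨p, hpP, fun k hk => ?_⟩
      rcases Nat.lt_succ_iff_lt_or_eq.mp hk with hk' | hk'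
      · exact hpag k hk'
      · subst hk'; exact (hpψ ▸ h).symm
    have hψinj : ∀ d ∈ E, ∀ d' ∈ E, ψ d = ψ d' → d = d' := by
      intro d hd d' hd' h
      obtain ⟨p, hpP, hpag, hpd, hpψ⟩ := hψspec d hd
      obtain ⟨q, hqP, hqag, hqd, hqψ⟩ := hψspec d' hd'
      have : p.1 M = q.1 M := by rw [← hpψ, ← hqψ, h]
      have := (hkey p hpP q hqP hpag hqag).mpr this
      rw [← hpd, ← hqd, this]
    -- find a value outside E
    have hd₀ : ∃ d : D, d ∉ E := by
      cases finite_or_infinite D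
      · haveI := Fintype.ofFinite D
        by_contra h
        push_neg at h
        have hEuniv : E = Finset.univ := Finset.eq_univ_iff_forall.mpr h
        have hsub : E.image ψ ⊆ Finset.univ.erase (a M) := by
          intro x hx
          simp only [Finset.mem_image] at hx
          obtain ⟨d, hd, rfl⟩ := hx
          exact Finset.mem_erase.mpr ⟨hψne d hd, Finset.mem_univ _⟩
        have hcard : (E.image ψ).card = E.card :=
          Finset.card_image_of_injOn (fun x hx y hy => hψinj x hx y hy)
        have h1 : Fintype.card D ≤ Fintype.card D - 1 := by
          calc Fintype.card D = E.card := by rw [hEuniv]; simp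
            _ = (E.image ψ).card := hcard.symm
            _ ≤ (Finset.univ.erase (a M)).card := Finset.card_le_card hsub
            _ = Fintype.card D - 1 := by rw [Finset.card_erase_of_mem (Finset.mem_univ _)]; simp
        have h2 : 0 < Fintype.card D := Fintype.card_pos
        omega
      · exact Infinite.exists_notMem_finset E
    obtain ⟨d₀, hd₀E⟩ := hd₀
    -- the target point
    set w : ℕ → D := fun k => if k = M then d₀ else p₀.2 k with hw
    have hwU : Agree (M + 1) w w := Agree.rfl
    obtain ⟨b, hbB, hbw⟩ := hB.exists_mem_open (isOpen_agree (M + 1) w)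
      ⟨w, Agree.rfl⟩
    have hbw : Agree (M + 1) w b := hbw
    have hbM : b M = d₀ := by
      have := hbw M (Nat.lt_succ_self M)
      simpa [hw] using this.symm
    have hbp₀ : Agree M b p₀.2 := by
      intro k hk
      have := hbw k (Nat.lt_succ_of_lt hk)
      simp only [hw, if_neg (Nat.ne_of_lt hk)] at this
      exact this.symm
    refine ⟨b, hbB, ?_⟩
    -- the main coherence claim for the new pair against old pairs
    have main : ∀ q ∈ P, ∀ n : ℕ, (Agree n a q.1 ↔ Agree n b q.2) := by
      intro q hq n
      rcases le_or_gt n M with hn | hn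
      · have h1 : Agree n a p₀.1 := hp₀.mono hn
        have h2 : Agree n b p₀.2 := hbp₀.mono hn
        constructor
        · intro h
          have := (hInv p₀ hp₀P q hq n).mp (h1.symm.trans h)
          exact h2.trans this
        · intro h
          have := (hInv p₀ hp₀P q hq n).mpr (h2.symm.trans h)
          exact h1.trans this
      · have hMn : M + 1 ≤ n := hn
        constructor
        · intro h
          exact absurd ⟨q, hq, h.mono hMn⟩ hQM1
        · intro h
          exfalso
          have h' : Agree (M + 1) b q.2 := h.mono hMn
          have hbq : Agree M b q.2 := h'.mono (Nat.le_succ M)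
          have hagq : Agree M a q.1 := by
            have hpq2 : Agree M p₀.2 q.2 := hbp₀.symm.trans hbq
            have hpq1 : Agree M p₀.1 q.1 := (hInv p₀ hp₀P q hq M).mpr hpq2
            exact hp₀.trans hpq1
          have : q.2 M ∈ E := by
            simp only [hE, Finset.mem_image, Finset.mem_filter]
            exact ⟨q, ⟨hq, hagq⟩, rfl⟩
          have hbqM : b M = q.2 M := h' M (Nat.lt_succ_self M)
          rw [← hbqM, hbM] at this
          exact hd₀E this
    -- assemble coherence of the extended set
    intro p hp q hq n
    rcases Set.mem_insert_iff.mp hp with rfl | hpP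
    · rcases Set.mem_insert_iff.mp hq with rfl | hqP
      · exact ⟨fun _ => Agree.rfl, fun _ => Agree.rfl⟩
      · exact main q hqP n
    · rcases Set.mem_insert_iff.mp hq with rfl | hqP
      · exact agree_symm_iff.trans ((main p hpP n).trans agree_symm_iff)
      · exact hInv p hpP q hqP n

end CDHAux

open CDHAux in
/-- `ℕ → D` is CDH for any nonempty discrete `D`. -/
theorem cdh_pi_discrete (D : Type*) [TopologicalSpace D] [DiscreteTopology D] [Nonempty D] :
    CDH (ℕ → D) := by
  classical
  intro A B hAc hAd hBc hBd
  -- enumerations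
  obtain ⟨α, hα⟩ := hAc.exists_eq_range (hAd.nonempty)
  obtain ⟨β, hβ⟩ := hBc.exists_eq_range (hBd.nonempty)
  have hαA : ∀ n, α n ∈ A := fun n => hα ▸ Set.mem_range_self n
  have hβB : ∀ n, β n ∈ B := fun n => hβ ▸ Set.mem_range_self n
  -- the "good" predicate
  set Good : Finset ((ℕ → D) × (ℕ → D)) → Prop := fun P =>
    P.Nonempty ∧ Coh (P : Set ((ℕ → D) × (ℕ → D))) ∧ (∀ p ∈ P, p.1 ∈ A ∧ p.2 ∈ B) with hGoodDef
  -- back lemma via symmetry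
  have back : ∀ (P : Finset ((ℕ → D) × (ℕ → D))), Good P → ∀ b0 : ℕ → D,
      ∃ a0 ∈ A, Coh (insert (a0, b0) (P : Set ((ℕ → D) × (ℕ → D)))) := by
    intro P hP b0
    obtain ⟨hne, hInv, hmem⟩ := hP
    have hswapInv : Coh ((P.image Prod.swap : Finset _) : Set ((ℕ → D) × (ℕ → D))) := by
      rw [Finset.coe_image]
      exact hInv.swap
    obtain ⟨a0, ha0, hcoh⟩ := forth hAd (P.image Prod.swap)
      (hne.image _) (by
        intro p hp
        simp only [Finset.mem_image] at hp
        obtain ⟨q, hq, rfl⟩ := hp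
        exact (hmem q hq).1) hswapInv b0
    refine ⟨a0, ha0, ?_⟩
    have : insert ((a0, b0) : (ℕ → D) × (ℕ → D)) (P : Set ((ℕ → D) × (ℕ → D))) =
        swapR (insert (b0, a0) ((P.image Prod.swap : Finset _) : Set ((ℕ → D) × (ℕ → D)))) := by
      rw [swapR, Set.image_insert_eq, Finset.coe_image, ← Set.image_comp]
      simp [Prod.swap]
    rw [this]
    exact hcoh.swap
  -- combined step
  have key : ∀ (n : ℕ) (P : Finset ((ℕ → D) × (ℕ → D))), ∃ P', Good P →
      (P ⊆ P' ∧ Good P' ∧ (∃ b, (α n, b) ∈ P') ∧ (∃ a, (a, β n) ∈ P')) := by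
    intro n P
    by_cases hP : Good P
    · obtain ⟨hne, hInv, hmem⟩ := hP
      obtain ⟨b, hbB, hcoh1⟩ := forth hBd P hne (fun p hp => (hmem p hp).2) hInv (α n)
      set P₁ : Finset ((ℕ → D) × (ℕ → D)) := insert (α n, b) P with hP₁
      have hP₁coe : (P₁ : Set ((ℕ → D) × (ℕ → D))) = insert (α n, b) (P : Set ((ℕ → D) × (ℕ → D))) := Finset.coe_insert _ _
      have hGood₁ : Good P₁ := by
        refine ⟨Finset.insert_nonempty _ _, hP₁coe ▸ hcoh1, ?_⟩
        intro p hp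
        rcases Finset.mem_insert.mp hp with rfl | hpP
        · exact ⟨hαA n, hbB⟩
        · exact hmem p hpP
      obtain ⟨a, haA, hcoh2⟩ := back P₁ hGood₁ (β n)
      refine ⟨insert (a, β n) P₁, fun _ => ⟨?_, ⟨Finset.insert_nonempty _ _, ?_, ?_⟩, ?_, ?_⟩⟩
      · exact (Finset.subset_insert _ _).trans (Finset.subset_insert _ _)
      · rw [Finset.coe_insert]; exact hcoh2
      · intro p hp
        rcases Finset.mem_insert.mp hp with rfl | hpP
        · exact ⟨haA, hβB n⟩
        · rcases Finset.mem_insert.mp hpP with rfl | hpP'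
          · exact ⟨hαA n, hbB⟩
          · exact (hGood₁.2.2) p hpP
      · exact ⟨b, Finset.mem_insert_of_mem (Finset.mem_insert_self _ _)⟩
      · exact ⟨a, Finset.mem_insert_self _ _⟩
    · exact ⟨P, fun h => absurd h hP⟩
  choose Fstep hFstep using key
  -- seed
  obtain ⟨a₀, ha₀⟩ := hAd.nonempty
  obtain ⟨b₀, hb₀⟩ := hBd.nonempty
  set seed : Finset ((ℕ → D) × (ℕ → D)) := {(a₀, b₀)} with hseed
  have hGoodSeed : Good seed := by
    refine ⟨Finset.singleton_nonempty _, ?_, ?_⟩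
    · intro p hp q hq n
      simp only [hseed, Finset.coe_singleton, Set.mem_singleton_iff] at hp hq
      subst hp; subst hq
      exact iff_of_true Agree.rfl Agree.rfl
    · intro p hp
      simp only [hseed, Finset.mem_singleton] at hp
      subst hp
      exact ⟨ha₀, hb₀⟩
  set seq : ℕ → Finset ((ℕ → D) × (ℕ → D)) :=
    fun n => Nat.rec seed (fun k Pk => Fstep k Pk) n with hseq
  have hseqsucc : ∀ n, seq (n + 1) = Fstep n (seq n) := fun n => rfl
  have hGoodSeq : ∀ n, Good (seq n) := by
    intro n
    induction n with
    | zero => exact hGoodSeed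
    | succ k ih => exact ((hFstep k (seq k)) ih).2.1
  have hstep : ∀ n, seq n ⊆ seq (n + 1) := fun n => (hFstep n (seq n) (hGoodSeq n)).1
  have hmono : ∀ m n, m ≤ n → seq m ⊆ seq n := by
    intro m n hmn
    induction n with
    | zero => rw [Nat.le_zero.mp hmn]
    | succ k ih =>
      rcases Nat.le_succ_iff_eq_or_le.mp hmn with h | h
      · rw [h]
      · exact (ih h).trans (hstep k)
  set R : Set ((ℕ → D) × (ℕ → D)) := ⋃ n, (↑(seq n) : Set _) with hR
  have hmemR : ∀ p ∈ R, p.1 ∈ A ∧ p.2 ∈ B := by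
    rintro p hp
    obtain ⟨_, ⟨n, rfl⟩, hp⟩ := hp
    exact (hGoodSeq n).2.2 p hp
  have hInvR : Coh R := by
    rintro p hp q hq n
    obtain ⟨_, ⟨m, rfl⟩, hp⟩ := hp
    obtain ⟨_, ⟨k, rfl⟩, hq⟩ := hq
    exact (hGoodSeq (max m k)).2.1 p (hmono m _ (le_max_left m k) hp)
      q (hmono k _ (le_max_right m k) hq) n
  have hdomR : ∀ a ∈ A, ∃ b, (a, b) ∈ R := by
    intro a ha
    rw [hα] at ha
    obtain ⟨n, rfl⟩ := ha
    obtain ⟨b, hb⟩ := (hFstep n (seq n) (hGoodSeq n)).2.2.1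
    exact ⟨b, Set.mem_iUnion.mpr ⟨n + 1, by rw [hseqsucc]; exact hb⟩⟩
  have hranR : ∀ b ∈ B, ∃ a, (a, b) ∈ R := by
    intro b hb
    rw [hβ] at hb
    obtain ⟨n, rfl⟩ := hb
    obtain ⟨a, ha⟩ := (hFstep n (seq n) (hGoodSeq n)).2.2.2
    exact ⟨a, Set.mem_iUnion.mpr ⟨n + 1, by rw [hseqsucc]; exact ha⟩⟩
  have hexDom : ∀ (x : ℕ → D) (n : ℕ), ∃ p ∈ R, Agree n x p.1 := by
    intro x n
    obtain ⟨a, haA, hax⟩ := hAd.exists_mem_open (isOpen_agree n x) ⟨x, Agree.rfl⟩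
    obtain ⟨b, hb⟩ := hdomR a haA
    exact ⟨(a, b), hb, hax⟩
  have hexRan : ∀ (y : ℕ → D) (n : ℕ), ∃ p ∈ swapR R, Agree n y p.1 := by
    intro y n
    obtain ⟨b, hbB, hby⟩ := hBd.exists_mem_open (isOpen_agree n y) ⟨y, Agree.rfl⟩
    obtain ⟨a, ha⟩ := hranR b hbB
    exact ⟨(b, a), mem_swapR ha, hby⟩
  -- assemble the homeomorphism
  have hleft : ∀ x, Fmap (swapR R) (Fmap R x) = x := fmap_leftInv hInvR hexDom
  have hright : ∀ x, Fmap R (Fmap (swapR R) x) = x := by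
    intro x
    have := fmap_leftInv hInvR.swap hexRan x
    rwa [swapR_swapR] at this
  let hom : (ℕ → D) ≃ₜ (ℕ → D) :=
    ⟨⟨Fmap R, Fmap (swapR R), hleft, hright⟩, fmap_continuous R, fmap_continuous (swapR R)⟩
  refine ⟨hom, ?_⟩
  have hcoe : ⇑hom = Fmap R := rfl
  rw [hcoe]
  ext y
  simp only [Set.mem_image]
  constructor
  · rintro ⟨a, ha, rfl⟩
    obtain ⟨b, hb⟩ := hdomR a ha
    rw [show Fmap R a = b from fmap_eq hInvR hb]
    exact (hmemR _ hb).2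
  · intro hy
    obtain ⟨a, ha⟩ := hranR y hy
    exact ⟨a, (hmemR _ ha).1, fmap_eq hInvR ha⟩

/-- The Cantor space and the Baire space are CDH. -/
theorem cantor_and_baire_cdh : CDH (ℕ → Bool) ∧ CDH (ℕ → ℕ) :=
  ⟨cdh_pi_discrete Bool, cdh_pi_discrete ℕ⟩
end

section
/- For every natural number n, the Euclidean space ℝⁿ is countable dense homogeneous: for every pair (A,B) of countable dense subsets of ℝⁿ there exists a homeomorphism h of ℝⁿ such that h[A]=B. -/
open Set Filter Metric Topology
open scoped NNReal

namespace CDHProof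


variable {E : Type*} [NormedAddCommGroup E] [NormedSpace ℝ E] [CompleteSpace E] [Nontrivial E]

/-- A "bump" homeomorphism of a normed space, supported in `ball p r`, moving `p` to `q`,
with displacement at most `r` and Lipschitz constant `2` in both directions. -/
lemma exists_bump (p q : E) (r : ℝ) (hr : 0 < r) (hpq : dist q p ≤ r / 2) :
    ∃ τ : E ≃ₜ E, τ p = q ∧ (∀ x : E, r ≤ dist x p → τ x = x) ∧
      (∀ x, dist (τ x) x ≤ r) ∧ (∀ x, dist (τ.symm x) x ≤ r) ∧
      LipschitzWith 2 τ ∧ LipschitzWith 2 τ.symm := by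
  set v : E := q - p with hv
  set s : E → ℝ := fun x => max (1 - dist x p / r) 0 with hs
  set g : E → E := fun x => s x • v with hgdef
  set f : E → E := fun x => x + g x with hfdef
  have hvr : ‖v‖ ≤ r / 2 := by rw [hv, ← dist_eq_norm]; exact hpq
  have hsle1 : ∀ x, s x ≤ 1 := by
    intro x
    apply max_le _ zero_le_one
    have : 0 ≤ dist x p / r := div_nonneg dist_nonneg hr.le
    linarith
  have hs0 : ∀ x, 0 ≤ s x := fun x => le_max_right _ _
  have hsdiff : ∀ x y : E, |s x - s y| ≤ dist x y / r := by
    intro x y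
    refine (abs_max_sub_max_le_abs _ _ _).trans ?_
    have : (1 - dist x p / r) - (1 - dist y p / r) = (dist y p - dist x p) / r := by ring
    rw [this, abs_div, abs_of_pos hr]
    gcongr
    rw [abs_sub_comm]
    exact abs_dist_sub_le _ _ _
  have hgdist : ∀ x y : E, dist (g x) (g y) ≤ (1 / 2) * dist x y := by
    intro x y
    rw [hgdef]
    simp only
    rw [dist_eq_norm, ← sub_smul, norm_smul, Real.norm_eq_abs]
    calc |s x - s y| * ‖v‖ ≤ (dist x y / r) * (r / 2) := by
          apply mul_le_mul (hsdiff x y) hvr (norm_nonneg v)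
          exact div_nonneg dist_nonneg hr.le
      _ = (1 / 2) * dist x y := by field_simp
  have happrox : ApproximatesLinearOn f
      ((ContinuousLinearEquiv.refl ℝ E : E ≃L[ℝ] E) : E →L[ℝ] E) univ (2⁻¹ : ℝ≥0) := by
    intro x _ y _
    have h1 : ((ContinuousLinearEquiv.refl ℝ E : E ≃L[ℝ] E) : E →L[ℝ] E) (x - y) = x - y := rfl
    have h2 : f x - f y - (x - y) = g x - g y := by rw [hfdef]; simp only; abel
    rw [h1, h2, ← dist_eq_norm, ← dist_eq_norm]
    have := hgdist x y
    have h3 : ((2⁻¹ : ℝ≥0) : ℝ) = 1 / 2 := by norm_num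
    rw [h3]
    linarith
  have hc : Subsingleton E ∨ (2⁻¹ : ℝ≥0) <
      (‖(((ContinuousLinearEquiv.refl ℝ E).symm : E ≃L[ℝ] E) : E →L[ℝ] E)‖₊)⁻¹ := by
    right
    have h4 : (↑(ContinuousLinearEquiv.refl ℝ E).symm : E →L[ℝ] E) =
        ContinuousLinearMap.id ℝ E := rfl
    rw [h4]
    have hid : ‖ContinuousLinearMap.id ℝ E‖₊ = 1 := by
      ext; simpa using ContinuousLinearMap.norm_id (𝕜 := ℝ) (E := E)
    rw [hid]
    rw [← NNReal.coe_lt_coe]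
    push_cast
    norm_num
  set τ : E ≃ₜ E := happrox.toHomeomorph f hc with hτ
  have hτapp : ∀ x, τ x = f x := fun x => rfl
  have hτid : ∀ x : E, r ≤ dist x p → τ x = x := by
    intro x hx
    rw [hτapp]
    have hsx : s x = 0 := by
      rw [hs]
      simp only [max_eq_right_iff, sub_nonpos]
      rw [le_div_iff₀ hr, one_mul]
      exact hx
    simp [hfdef, hgdef, hsx]
  have hτp : τ p = q := by
    rw [hτapp]
    have hsp : s p = 1 := by simp [hs]
    simp [hfdef, hgdef, hsp, hv]
  have hdisp : ∀ x, dist (τ x) x ≤ r := by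
    intro x
    rw [hτapp, hfdef]
    simp only
    rw [dist_eq_norm, add_sub_cancel_left, hgdef]
    simp only
    rw [norm_smul, Real.norm_eq_abs, abs_of_nonneg (hs0 x)]
    calc s x * ‖v‖ ≤ 1 * (r / 2) :=
          mul_le_mul (hsle1 x) hvr (norm_nonneg v) zero_le_one
      _ ≤ r := by linarith
  have hlip : LipschitzWith 2 (τ : E → E) := by
    apply LipschitzWith.of_dist_le_mul
    intro x y
    rw [hτapp, hτapp]
    push_cast
    calc dist (f x) (f y) ≤ dist x y + dist (g x) (g y) := by
          rw [hfdef]; simp only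
          rw [dist_eq_norm, dist_eq_norm, dist_eq_norm]
          have h5 : x + g x - (y + g y) = (x - y) + (g x - g y) := by abel
          rw [h5]
          exact norm_add_le _ _
      _ ≤ dist x y + (1/2) * dist x y := by linarith [hgdist x y]
      _ ≤ 2 * dist x y := by linarith [dist_nonneg (x := x) (y := y)]
  have hanti : AntilipschitzWith 2 (τ : E → E) := by
    apply AntilipschitzWith.of_le_mul_dist
    intro x y
    have h1 : dist x y ≤ dist (f x) (f y) + (1/2) * dist x y := by
      have h6 : dist x y ≤ dist (f x) (f y) + dist (g x) (g y) := by
        rw [dist_eq_norm, dist_eq_norm, dist_eq_norm]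
        have hxy : x - y = (f x - f y) - (g x - g y) := by rw [hfdef]; simp only; abel
        rw [hxy]
        exact norm_sub_le _ _
      linarith [hgdist x y]
    rw [hτapp, hτapp]
    push_cast
    linarith
  have hlipsymm : LipschitzWith 2 (τ.symm : E → E) :=
    hanti.to_rightInverse τ.right_inv
  have hdispsymm : ∀ x, dist (τ.symm x) x ≤ r := by
    intro x
    have := hdisp (τ.symm x)
    rwa [Homeomorph.apply_symm_apply, dist_comm] at this
  exact ⟨τ, hτp, hτid, hdisp, hdispsymm, hlip, hlipsymm⟩



/-- Core move: modify `h` by a bump so that the new homeomorphism maps `a` to `b`,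
while fixing the images of the finite set `F`. -/
lemma core_move (A B : Set E)
    (h : E ≃ₜ E) (C : ℝ≥0) (hC : 1 ≤ C) (hl : LipschitzWith C h) (hl' : LipschitzWith C h.symm)
    (F : Finset E) (hFA : ↑F ⊆ A) (hFB : ∀ x ∈ F, h x ∈ B)
    (ρ : ℝ) (hρ : 0 < ρ) (a : E) (ha : a ∈ A) (b : E) (hb : b ∈ B)
    (r : ℝ) (hr : 0 < r) (hrρ : r ≤ ρ) (hrC : (C : ℝ) * r ≤ ρ)
    (hab : dist b (h a) ≤ r / 2) (hfar : ∀ x ∈ F, r ≤ dist (h x) (h a)) :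
    ∃ (h' : E ≃ₜ E), h' a = b ∧ insert a (F : Set E) ⊆ A ∧
      (∀ x ∈ insert a (F : Set E), h' x ∈ B) ∧ (∀ x ∈ F, h' x = h x) ∧
      (∀ x, dist (h' x) (h x) ≤ ρ) ∧ (∀ x, dist (h'.symm x) (h.symm x) ≤ ρ) ∧
      LipschitzWith (2 * C) h' ∧ LipschitzWith (2 * C) h'.symm := by
  obtain ⟨τ, hτp, hτid, hdisp, hdispsymm, hτlip, hτlipsymm⟩ := exists_bump (h a) b r hr hab
  refine ⟨h.trans τ, ?_, ?_, ?_, ?_, ?_, ?_, ?_, ?_⟩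
  · simp [Homeomorph.trans_apply, hτp]
  · intro x hx
    rcases Set.mem_insert_iff.1 hx with rfl | hx
    · exact ha
    · exact hFA hx
  · intro x hx
    rcases Set.mem_insert_iff.1 hx with rfl | hx
    · simpa [Homeomorph.trans_apply, hτp] using hb
    · have : τ (h x) = h x := hτid _ (hfar x hx)
      simpa [Homeomorph.trans_apply, this] using hFB x hx
  · intro x hx
    simp [Homeomorph.trans_apply, hτid _ (hfar x hx)]
  · intro x
    simpa [Homeomorph.trans_apply] using (hdisp (h x)).trans hrρ
  · intro x
    calc dist ((h.trans τ).symm x) (h.symm x) = dist (h.symm (τ.symm x)) (h.symm x) := rfl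
      _ ≤ C * dist (τ.symm x) x := hl'.dist_le_mul _ _
      _ ≤ C * r := by
          have := hdispsymm x
          have hC0 : (0:ℝ) ≤ C := C.coe_nonneg
          nlinarith
      _ ≤ ρ := hrC
  · have : LipschitzWith (2 * C) (⇑τ ∘ ⇑h) := hτlip.comp hl
    exact this
  · have : LipschitzWith (C * 2) (⇑h.symm ∘ ⇑τ.symm) := hl'.comp hτlipsymm
    rw [mul_comm] at this
    exact this

lemma exists_far (h : E ≃ₜ E) (F : Finset E) (p : E) (hp : ∀ x ∈ F, h x ≠ p) :
    ∃ m : ℝ, 0 < m ∧ ∀ x ∈ F, m ≤ dist (h x) p := by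
  classical
  induction F using Finset.induction with
  | empty => exact ⟨1, one_pos, by simp⟩
  | @insert c Fs hcs ih =>
    obtain ⟨m, hm, hmle⟩ := ih (fun x hx => hp x (Finset.mem_insert_of_mem hx))
    have hcp : h c ≠ p := hp c (Finset.mem_insert_self _ _)
    refine ⟨min m (dist (h c) p), lt_min hm (dist_pos.2 hcp), ?_⟩
    intro x hx
    rcases Finset.mem_insert.1 hx with rfl | hx
    · exact min_le_right _ _
    · exact (min_le_left _ _).trans (hmle x hx)

/-- One step of the back-and-forth construction. -/
lemma step (A B : Set E) (hA : Dense A) (hB : Dense B)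
    (h : E ≃ₜ E) (C : ℝ≥0) (hC : 1 ≤ C) (hl : LipschitzWith C h) (hl' : LipschitzWith C h.symm)
    (F : Finset E) (hFA : ↑F ⊆ A) (hFB : ∀ x ∈ F, h x ∈ B)
    (ρ : ℝ) (hρ : 0 < ρ) (t : E ⊕ E) (ht : Sum.elim (· ∈ A) (· ∈ B) t) :
    ∃ (h' : E ≃ₜ E) (F' : Finset E), F ⊆ F' ∧ ↑F' ⊆ A ∧ (∀ x ∈ F', h' x ∈ B) ∧
      (∀ x ∈ F, h' x = h x) ∧
      (∀ x, dist (h' x) (h x) ≤ ρ) ∧ (∀ x, dist (h'.symm x) (h.symm x) ≤ ρ) ∧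
      LipschitzWith (2 * C) h' ∧ LipschitzWith (2 * C) h'.symm ∧
      Sum.elim (· ∈ (F' : Set E)) (fun b => ∃ x ∈ F', h' x = b) t := by
  classical
  have hC0 : (0:ℝ) < C := by exact_mod_cast lt_of_lt_of_le one_pos hC
  obtain ⟨t⟩ | ⟨t⟩ := t
  -- forth: ensure a := t is matched
  · simp only [Sum.elim_inl] at ht ⊢
    by_cases haF : t ∈ F
    · exact ⟨h, F, Finset.Subset.refl F, hFA, hFB, fun x _ => rfl,
        fun x => by simp [hρ.le], fun x => by simp [hρ.le],
        hl.weaken (by calc C = 1 * C := (one_mul C).symm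
          _ ≤ 2 * C := by gcongr; norm_num),
        hl'.weaken (by calc C = 1 * C := (one_mul C).symm
          _ ≤ 2 * C := by gcongr; norm_num), haF⟩
    · obtain ⟨m, hm, hmle⟩ := exists_far h F (h t)
        (fun x hx hxe => haF (by rwa [← h.injective hxe]))
      set r : ℝ := min (min ρ (ρ / C)) m with hrdef
      have hr : 0 < r := lt_min (lt_min hρ (div_pos hρ hC0)) hm
      obtain ⟨b, hbB, hbmem⟩ := hB.exists_mem_open isOpen_ball
        (nonempty_ball.2 (by positivity) : (ball (h t) (r/2)).Nonempty)
      obtain ⟨h', hh'a, hFA', hFB', hagree, hd1, hd2, hlip1, hlip2⟩ :=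
        core_move A B h C hC hl hl' F hFA hFB ρ hρ t ht b hbB r hr
          ((min_le_left _ _).trans (min_le_left _ _))
          (by
            have h1 : r ≤ ρ / C := (min_le_left _ _).trans (min_le_right _ _)
            rw [← le_div_iff₀' hC0]
            exact h1)
          (le_of_lt (by rwa [mem_ball] at hbmem))
          (fun x hx => (min_le_right _ _).trans (hmle x hx))
      refine ⟨h', insert t F, Finset.subset_insert _ _, ?_, ?_, hagree, hd1, hd2,
        hlip1, hlip2, Finset.mem_insert_self _ _⟩
      · rwa [Finset.coe_insert]
      · intro x hx
        exact hFB' x (by rwa [← Finset.coe_insert, Finset.mem_coe])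
  -- back: ensure b := t is covered
  · simp only [Sum.elim_inr] at ht ⊢
    by_cases hbF : ∃ x ∈ F, h x = t
    · exact ⟨h, F, Finset.Subset.refl F, hFA, hFB, fun x _ => rfl,
        fun x => by simp [hρ.le], fun x => by simp [hρ.le],
        hl.weaken (by calc C = 1 * C := (one_mul C).symm
          _ ≤ 2 * C := by gcongr; norm_num),
        hl'.weaken (by calc C = 1 * C := (one_mul C).symm
          _ ≤ 2 * C := by gcongr; norm_num), hbF⟩
    · push_neg at hbF
      obtain ⟨m, hm, hmle⟩ := exists_far h F t hbF
      set r : ℝ := min (min ρ (ρ / C)) (m / 2) with hrdef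
      have hr : 0 < r := lt_min (lt_min hρ (div_pos hρ hC0)) (by linarith)
      -- find a fresh point a ∈ A \ F with h a close to t
      have hAF : Dense (A \ (F : Set E)) := by
        haveI := Module.punctured_nhds_neBot ℝ E
        exact hA.diff_finite F.finite_toSet
      have himg : Dense (⇑h '' (A \ (F : Set E))) :=
        (h.surjective.denseRange).dense_image h.continuous hAF
      obtain ⟨y, hy, hymem⟩ := himg.exists_mem_open isOpen_ball
        (nonempty_ball.2 (by positivity) : (ball t (r/2)).Nonempty)
      obtain ⟨a, haAF, rfl⟩ := hy
      have hclose : dist t (h a) ≤ r / 2 := by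
        rw [mem_ball] at hymem
        rw [dist_comm]
        exact hymem.le
      have hfar : ∀ x ∈ F, r ≤ dist (h x) (h a) := by
        intro x hx
        have h1 : m ≤ dist (h x) t := hmle x hx
        have h2 : dist (h x) t ≤ dist (h x) (h a) + dist (h a) t := dist_triangle _ _ _
        have h3 : dist (h a) t ≤ r / 2 := by rwa [dist_comm] at hclose
        have h4 : r ≤ m / 2 := (min_le_right _ _)
        linarith
      obtain ⟨h', hh'a, hFA', hFB', hagree, hd1, hd2, hlip1, hlip2⟩ :=
        core_move A B h C hC hl hl' F hFA hFB ρ hρ a haAF.1 t ht r hr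
          ((min_le_left _ _).trans (min_le_left _ _))
          (by
            have h1 : r ≤ ρ / C := (min_le_left _ _).trans (min_le_right _ _)
            rw [← le_div_iff₀' hC0]
            exact h1)
          hclose hfar
      refine ⟨h', insert a F, Finset.subset_insert _ _, ?_, ?_, hagree, hd1, hd2,
        hlip1, hlip2, a, Finset.mem_insert_self _ _, hh'a⟩
      · rwa [Finset.coe_insert]
      · intro x hx
        exact hFB' x (by rwa [← Finset.coe_insert, Finset.mem_coe])



/-- The task at stage `k`: at even stages, match a point of `A`; at odd stages cover
a point of `B`. -/
def task (ea eb : ℕ → E) (k : ℕ) : E ⊕ E :=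
  if Even k then Sum.inl (ea (k / 2)) else Sum.inr (eb (k / 2))

/-- Invariant of a state of the construction at stage `k`. -/
def GoodSt (A B : Set E) (k : ℕ) (s : (E ≃ₜ E) × Finset E) : Prop :=
  ↑s.2 ⊆ A ∧ (∀ x ∈ s.2, s.1 x ∈ B) ∧ LipschitzWith (2 ^ k) s.1 ∧ LipschitzWith (2 ^ k) s.1.symm

/-- Relation between consecutive states. -/
def RelSt (ea eb : ℕ → E) (k : ℕ) (s s' : (E ≃ₜ E) × Finset E) : Prop :=
  s.2 ⊆ s'.2 ∧ (∀ x ∈ s.2, s'.1 x = s.1 x) ∧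
    (∀ x, dist (s'.1 x) (s.1 x) ≤ (4 : ℝ)⁻¹ ^ k) ∧
    (∀ x, dist (s'.1.symm x) (s.1.symm x) ≤ (4 : ℝ)⁻¹ ^ k) ∧
    Sum.elim (· ∈ (s'.2 : Set E)) (fun b => ∃ x ∈ s'.2, s'.1 x = b) (task ea eb k)

lemma key_s19 (A B : Set E) (ea eb : ℕ → E) (hA : Dense A) (hB : Dense B)
    (heaA : ∀ i, ea i ∈ A) (hebB : ∀ i, eb i ∈ B) (k : ℕ) (s : (E ≃ₜ E) × Finset E)
    (hs : GoodSt A B k s) :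
    ∃ s', GoodSt A B (k + 1) s' ∧ RelSt ea eb k s s' := by
  obtain ⟨h1, h2, h3, h4⟩ := hs
  obtain ⟨h', F', hsub, hFA', hFB', hagree, hd1, hd2, hlip1, hlip2, htarget⟩ :=
    step A B hA hB s.1 (2 ^ k) (one_le_pow₀ one_le_two) h3 h4 s.2 h1 h2
      ((4 : ℝ)⁻¹ ^ k) (by positivity) (task ea eb k)
      (by unfold task; split <;> simp [heaA, hebB])
  have hpow : (2 : ℝ≥0) ^ (k + 1) = 2 * 2 ^ k := by rw [pow_succ, mul_comm]
  exact ⟨(h', F'), ⟨hFA', hFB', hpow ▸ hlip1, hpow ▸ hlip2⟩,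
    hsub, hagree, hd1, hd2, htarget⟩

/-- The recursively constructed sequence of states. -/
noncomputable def seqSt (A B : Set E) (ea eb : ℕ → E) (hA : Dense A) (hB : Dense B)
    (heaA : ∀ i, ea i ∈ A) (hebB : ∀ i, eb i ∈ B) :
    ∀ k : ℕ, {s : (E ≃ₜ E) × Finset E // GoodSt A B k s}
  | 0 => ⟨(Homeomorph.refl E, ∅), by
      refine ⟨by simp, by simp, ?_, ?_⟩ <;>
      · rw [pow_zero]
        simpa using LipschitzWith.id⟩
  | (k + 1) =>
    ⟨Classical.choose (key_s19 A B ea eb hA hB heaA hebB k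
        (seqSt A B ea eb hA hB heaA hebB k).1 (seqSt A B ea eb hA hB heaA hebB k).2),
      (Classical.choose_spec (key_s19 A B ea eb hA hB heaA hebB k
        (seqSt A B ea eb hA hB heaA hebB k).1 (seqSt A B ea eb hA hB heaA hebB k).2)).1⟩

lemma seq_rel (A B : Set E) (ea eb : ℕ → E) (hA : Dense A) (hB : Dense B)
    (heaA : ∀ i, ea i ∈ A) (hebB : ∀ i, eb i ∈ B) (k : ℕ) :
    RelSt ea eb k (seqSt A B ea eb hA hB heaA hebB k).1
      (seqSt A B ea eb hA hB heaA hebB (k + 1)).1 := by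
  have := (Classical.choose_spec (key_s19 A B ea eb hA hB heaA hebB k
      (seqSt A B ea eb hA hB heaA hebB k).1 (seqSt A B ea eb hA hB heaA hebB k).2)).2
  rw [seqSt]
  exact this



theorem cdh_normed (A B : Set E) (hAc : A.Countable) (hA : Dense A)
    (hBc : B.Countable) (hB : Dense B) : ∃ h : E ≃ₜ E, h '' A = B := by
  obtain ⟨ea, hea⟩ := hAc.exists_eq_range hA.nonempty
  obtain ⟨eb, heb⟩ := hBc.exists_eq_range hB.nonempty
  have heaA : ∀ i, ea i ∈ A := fun i => hea ▸ mem_range_self i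
  have hebB : ∀ i, eb i ∈ B := fun i => heb ▸ mem_range_self i
  set S := seqSt A B ea eb hA hB heaA hebB with hS
  set H : ℕ → E → E := fun k => (S k).1.1 with hH
  set G : ℕ → E → E := fun k => ((S k).1.1).symm with hG
  set F : ℕ → Finset E := fun k => (S k).1.2 with hF
  have hrel : ∀ k, RelSt ea eb k (S k).1 (S (k + 1)).1 :=
    seq_rel A B ea eb hA hB heaA hebB
  have hlipH : ∀ k, LipschitzWith (2 ^ k) (H k) := fun k => (S k).2.2.2.1
  have hlipG : ∀ k, LipschitzWith (2 ^ k) (G k) := fun k => (S k).2.2.2.2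
  have hFA : ∀ k, ↑(F k) ⊆ A := fun k => (S k).2.1
  have hFB : ∀ k, ∀ x ∈ F k, H k x ∈ B := fun k => (S k).2.2.1
  have hdH : ∀ k x, dist (H k x) (H (k + 1) x) ≤ 1 * (4 : ℝ)⁻¹ ^ k := by
    intro k x
    rw [one_mul, dist_comm]
    exact (hrel k).2.2.1 x
  have hdG : ∀ k x, dist (G k x) (G (k + 1) x) ≤ 1 * (4 : ℝ)⁻¹ ^ k := by
    intro k x
    rw [one_mul, dist_comm]
    exact (hrel k).2.2.2.1 x
  have hinv4 : (4 : ℝ)⁻¹ < 1 := by norm_num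
  -- limits
  have hcauchyH : ∀ x, CauchySeq fun k => H k x := fun x =>
    cauchySeq_of_le_geometric _ 1 hinv4 (fun k => hdH k x)
  have hcauchyG : ∀ x, CauchySeq fun k => G k x := fun x =>
    cauchySeq_of_le_geometric _ 1 hinv4 (fun k => hdG k x)
  set hlim : E → E := fun x => limUnder atTop fun k => H k x with hhlim
  set glim : E → E := fun x => limUnder atTop fun k => G k x with hglim
  have htendH : ∀ x, Tendsto (fun k => H k x) atTop (𝓝 (hlim x)) := fun x =>
    (hcauchyH x).tendsto_limUnder
  have htendG : ∀ x, Tendsto (fun k => G k x) atTop (𝓝 (glim x)) := fun x =>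
    (hcauchyG x).tendsto_limUnder
  have hdistH : ∀ k x, dist (H k x) (hlim x) ≤ 1 * (4:ℝ)⁻¹ ^ k / (1 - 4⁻¹) := fun k x =>
    dist_le_of_le_geometric_of_tendsto _ _ hinv4 (fun k => hdH k x) (htendH x) k
  have hdistG : ∀ k x, dist (G k x) (glim x) ≤ 1 * (4:ℝ)⁻¹ ^ k / (1 - 4⁻¹) := fun k x =>
    dist_le_of_le_geometric_of_tendsto _ _ hinv4 (fun k => hdG k x) (htendG x) k
  -- the error bound tends to zero
  have hbound0 : Tendsto (fun k : ℕ => (2:ℝ) ^ k * (1 * (4:ℝ)⁻¹ ^ k / (1 - 4⁻¹)))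
      atTop (𝓝 0) := by
    have heq : ∀ k : ℕ, (2:ℝ) ^ k * (1 * (4:ℝ)⁻¹ ^ k / (1 - 4⁻¹)) = (4/3) * (2⁻¹:ℝ) ^ k := by
      intro k
      rw [show (2⁻¹:ℝ) = 2 * 4⁻¹ by norm_num, mul_pow]
      ring
    rw [tendsto_congr heq]
    have := tendsto_pow_atTop_nhds_zero_of_lt_one (by norm_num : (0:ℝ) ≤ 2⁻¹)
      (by norm_num : (2⁻¹:ℝ) < 1)
    simpa using this.const_mul (4/3 : ℝ)
  -- left and right inverse
  have hleft : ∀ x, glim (hlim x) = x := by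
    intro x
    refine tendsto_nhds_unique (htendG (hlim x)) ?_
    rw [tendsto_iff_dist_tendsto_zero]
    apply squeeze_zero (fun k => dist_nonneg)
      (g := fun k => (2:ℝ) ^ k * (1 * (4:ℝ)⁻¹ ^ k / (1 - 4⁻¹))) _ hbound0
    intro k
    have h1 : G k (H k x) = x := Homeomorph.symm_apply_apply _ _
    calc dist (G k (hlim x)) x = dist (G k (hlim x)) (G k (H k x)) := by rw [h1]
      _ ≤ 2 ^ k * dist (hlim x) (H k x) := (hlipG k).dist_le_mul _ _
      _ ≤ (2:ℝ) ^ k * (1 * (4:ℝ)⁻¹ ^ k / (1 - 4⁻¹)) := by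
          push_cast
          rw [dist_comm]
          exact mul_le_mul_of_nonneg_left (hdistH k x) (by positivity)
  have hright : ∀ x, hlim (glim x) = x := by
    intro x
    refine tendsto_nhds_unique (htendH (glim x)) ?_
    rw [tendsto_iff_dist_tendsto_zero]
    apply squeeze_zero (fun k => dist_nonneg)
      (g := fun k => (2:ℝ) ^ k * (1 * (4:ℝ)⁻¹ ^ k / (1 - 4⁻¹))) _ hbound0
    intro k
    have h1 : H k (G k x) = x := Homeomorph.apply_symm_apply _ _
    calc dist (H k (glim x)) x = dist (H k (glim x)) (H k (G k x)) := by rw [h1]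
      _ ≤ 2 ^ k * dist (glim x) (G k x) := (hlipH k).dist_le_mul _ _
      _ ≤ (2:ℝ) ^ k * (1 * (4:ℝ)⁻¹ ^ k / (1 - 4⁻¹)) := by
          push_cast
          rw [dist_comm]
          exact mul_le_mul_of_nonneg_left (hdistG k x) (by positivity)
  -- continuity via uniform convergence
  have hcontH : Continuous hlim := by
    refine TendstoUniformly.continuous (F := fun k x => H k x) (p := (atTop : Filter ℕ)) ?_
      (Eventually.of_forall fun k => (S k).1.1.continuous).frequently
    rw [Metric.tendstoUniformly_iff]
    intro ε hε
    have : Tendsto (fun k : ℕ => 1 * (4:ℝ)⁻¹ ^ k / (1 - 4⁻¹)) atTop (𝓝 0) := by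
      have := tendsto_pow_atTop_nhds_zero_of_lt_one (by norm_num : (0:ℝ) ≤ 4⁻¹) hinv4
      have h2 : Tendsto (fun k : ℕ => ((4:ℝ)⁻¹ ^ k) * (1 / (1 - 4⁻¹))) atTop (𝓝 0) := by
        simpa using this.mul_const (1 / (1 - 4⁻¹) : ℝ)
      refine h2.congr fun k => by ring
    filter_upwards [this.eventually (gt_mem_nhds hε)] with k hk x
    rw [dist_comm]
    exact lt_of_le_of_lt (hdistH k x) hk
  have hcontG : Continuous glim := by
    refine TendstoUniformly.continuous (F := fun k x => G k x) (p := (atTop : Filter ℕ)) ?_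
      (Eventually.of_forall fun k => (S k).1.1.symm.continuous).frequently
    rw [Metric.tendstoUniformly_iff]
    intro ε hε
    have : Tendsto (fun k : ℕ => 1 * (4:ℝ)⁻¹ ^ k / (1 - 4⁻¹)) atTop (𝓝 0) := by
      have := tendsto_pow_atTop_nhds_zero_of_lt_one (by norm_num : (0:ℝ) ≤ 4⁻¹) hinv4
      have h2 : Tendsto (fun k : ℕ => ((4:ℝ)⁻¹ ^ k) * (1 / (1 - 4⁻¹))) atTop (𝓝 0) := by
        simpa using this.mul_const (1 / (1 - 4⁻¹) : ℝ)
      refine h2.congr fun k => by ring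
    filter_upwards [this.eventually (gt_mem_nhds hε)] with k hk x
    rw [dist_comm]
    exact lt_of_le_of_lt (hdistG k x) hk
  -- the homeomorphism
  set hh : E ≃ₜ E :=
    { toFun := hlim
      invFun := glim
      left_inv := hleft
      right_inv := hright
      continuous_toFun := hcontH
      continuous_invFun := hcontG } with hhdef
  refine ⟨hh, ?_⟩
  -- bookkeeping: monotonicity and persistence
  have hFmono : Monotone fun k => F k := monotone_nat_of_le_succ fun k => (hrel k).1
  have hpersist : ∀ k j, k ≤ j → ∀ x ∈ F k, H j x = H k x := by
    intro k j hkj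
    induction j, hkj using Nat.le_induction with
    | base => intro x _; rfl
    | succ j hkj ih =>
      intro x hx
      rw [← ih x hx]
      exact (hrel j).2.1 x (hFmono hkj hx)
  have hlimconst : ∀ k x, x ∈ F k → hlim x = H k x := by
    intro k x hx
    refine tendsto_nhds_unique (htendH x) ?_
    refine Tendsto.congr' ?_ tendsto_const_nhds
    filter_upwards [eventually_ge_atTop k] with j hj
    exact (hpersist k j hj x hx).symm
  -- image equality
  apply Set.Subset.antisymm
  · rintro _ ⟨x, hxA, rfl⟩
    rw [hea] at hxA
    obtain ⟨i, rfl⟩ := hxA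
    have htarget := (hrel (2 * i)).2.2.2.2
    have htask : task ea eb (2 * i) = Sum.inl (ea i) := by
      unfold task
      have h2 : (2 * i) / 2 = i := by omega
      rw [h2, if_pos (even_two_mul i)]
    rw [htask] at htarget
    simp only [Sum.elim_inl] at htarget
    have hxF : ea i ∈ F (2 * i + 1) := htarget
    have : (hh : E → E) (ea i) = H (2 * i + 1) (ea i) := hlimconst _ _ hxF
    rw [this]
    exact hFB _ _ hxF
  · intro b hbB
    rw [heb] at hbB
    obtain ⟨i, rfl⟩ := hbB
    have htarget := (hrel (2 * i + 1)).2.2.2.2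
    have htask : task ea eb (2 * i + 1) = Sum.inr (eb i) := by
      unfold task
      have h2 : (2 * i + 1) / 2 = i := by omega
      rw [h2, if_neg (by rw [Nat.not_even_iff_odd]; exact ⟨i, rfl⟩)]
    rw [htask] at htarget
    simp only [Sum.elim_inr] at htarget
    obtain ⟨x, hxF, hxeq⟩ := htarget
    refine ⟨x, hFA _ hxF, ?_⟩
    have : (hh : E → E) x = H (2 * i + 1 + 1) x := hlimconst _ _ hxF
    rw [this]
    exact hxeq


end CDHProof

/-- Euclidean space `ℝⁿ` is CDH for every `n`. -/
theorem euclidean_cdh (n : ℕ) : CDH (EuclideanSpace ℝ (Fin n)) := by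
  intro A B hAc hA hBc hB
  rcases Nat.eq_zero_or_pos n with rfl | hn
  · haveI : Subsingleton (EuclideanSpace ℝ (Fin 0)) :=
      ⟨fun a b => by ext i; exact i.elim0⟩
    refine ⟨Homeomorph.refl _, ?_⟩
    obtain ⟨a, ha⟩ := hA.nonempty
    obtain ⟨b, hb⟩ := hB.nonempty
    have hAB : A = B := by
      ext x
      constructor
      · intro _; exact (Subsingleton.elim b x) ▸ hb
      · intro _; exact (Subsingleton.elim a x) ▸ ha
    simp [hAB]
  · haveI : Nonempty (Fin n) := ⟨⟨0, hn⟩⟩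
    haveI : Nontrivial (EuclideanSpace ℝ (Fin n)) := inferInstance
    exact CDHProof.cdh_normed A B hAc hA hBc hB
end
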